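/- arXiv:1605.00254 — 12 statements merged into one kernel-verified Lean document; each statement's English description precedes it below -/
import Mathlib

section
/- Let G be a group and ω a normalized 3-cocycle on G with multiplicative phase θ. Then for all g, x, y, z ∈ G: θ_g(x,y)·θ_g(xy,z) = θ_g(x,yz)·θ_{x⁻¹gx}(y,z). -/
/-- The multiplicative phase `θ_g(x,y)` of a 3-cocycle `ω`. -/
noncomputable def theta {G : Type*} [Group G] (ω : G → G → G → ℂ) (g x y : G) : ℂ :=
  ω g x y * ω x y ((x * y)⁻¹ * g * (x * y)) / ω x (x⁻¹ * g * x) y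

/-- For a normalized 3-cocycle `ω` on `G` with multiplicative phase `θ`, we have
`θ_g(x,y)·θ_g(xy,z) = θ_g(x,yz)·θ_{x⁻¹gx}(y,z)` for all `g, x, y, z ∈ G`. -/
theorem theta_assoc {G : Type*} [Group G] (ω : G → G → G → ℂ)
    (habs : ∀ a b c : G, ‖ω a b c‖ = 1)
    (hcoc : ∀ a b c d : G,
      ω a b c * ω a (b * c) d * ω b c d = ω (a * b) c d * ω a b (c * d))
    (hnorm : ∀ g h : G, ω g 1 h = 1) :
    ∀ g x y z : G,
      theta ω g x y * theta ω g (x * y) z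
        = theta ω g x (y * z) * theta ω (x⁻¹ * g * x) y z := by
  intro g x y z
  have hne : ∀ a b c : G, ω a b c ≠ 0 := by
    intro a b c h
    have := habs a b c
    rw [h] at this
    simp at this
  simp only [theta]
  have e1 : (x * y)⁻¹ * g * (x * y) = y⁻¹ * (x⁻¹ * g * x) * y := by group
  have e2 : (x * y * z)⁻¹ * g * (x * y * z)
      = z⁻¹ * (y⁻¹ * (x⁻¹ * g * x) * y) * z := by group
  have e3 : (x * (y * z))⁻¹ * g * (x * (y * z))
      = z⁻¹ * (y⁻¹ * (x⁻¹ * g * x) * y) * z := by group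
  have e4 : (y * z)⁻¹ * (x⁻¹ * g * x) * (y * z)
      = z⁻¹ * (y⁻¹ * (x⁻¹ * g * x) * y) * z := by group
  rw [e1, e2, e3, e4]
  rw [div_mul_div_comm, div_mul_div_comm, div_eq_div_iff
    (mul_ne_zero (hne _ _ _) (hne _ _ _)) (mul_ne_zero (hne _ _ _) (hne _ _ _))]
  have hA := hcoc g x y z
  have hB := hcoc x (x⁻¹ * g * x) y z
  have hC := hcoc x y (y⁻¹ * (x⁻¹ * g * x) * y) z
  have hD := hcoc x y z (z⁻¹ * (y⁻¹ * (x⁻¹ * g * x) * y) * z)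
  have f1 : x * (x⁻¹ * g * x) = g * x := by group
  have f2 : x⁻¹ * g * x * y = y * (y⁻¹ * (x⁻¹ * g * x) * y) := by group
  have f3 : y⁻¹ * (x⁻¹ * g * x) * y * z
      = z * (z⁻¹ * (y⁻¹ * (x⁻¹ * g * x) * y) * z) := by group
  rw [f1, f2] at hB
  rw [f3] at hC
  set a1 := ω g x y
  set a2 := ω x y (y⁻¹ * (x⁻¹ * g * x) * y)
  set a3 := ω x (x⁻¹ * g * x) y
  set a4 := ω g (x * y) z
  set a5 := ω (x * y) z (z⁻¹ * (y⁻¹ * (x⁻¹ * g * x) * y) * z)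
  set a6 := ω (x * y) (y⁻¹ * (x⁻¹ * g * x) * y) z
  set b1 := ω g x (y * z)
  set b2 := ω x (y * z) (z⁻¹ * (y⁻¹ * (x⁻¹ * g * x) * y) * z)
  set b3 := ω x (x⁻¹ * g * x) (y * z)
  set b4 := ω (x⁻¹ * g * x) y z
  set b5 := ω y z (z⁻¹ * (y⁻¹ * (x⁻¹ * g * x) * y) * z)
  set b6 := ω y (y⁻¹ * (x⁻¹ * g * x) * y) z
  set a7 := ω x y z
  set a8 := ω (g * x) y z
  set a9 := ω x (y * (y⁻¹ * (x⁻¹ * g * x) * y)) z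
  set a10 := ω x y (z * (z⁻¹ * (y⁻¹ * (x⁻¹ * g * x) * y) * z))
  have key : (a1 * a2 * (a4 * a5) * (b3 * b6)) * (a7 * a8)
      = (b1 * b2 * (b4 * b5) * (a3 * a6)) * (a7 * a8) := by
    linear_combination (a2 * a5 * b3 * b6 * a8) * hA
      - (a2 * a5 * b6 * b1 * a8) * hB
      + (a5 * b1 * a8 * a3 * b4) * hC
      - (b1 * a8 * a3 * b4 * a6) * hD
  exact mul_right_cancel₀ (mul_ne_zero (hne _ _ _) (hne _ _ _)) key
end

section
/- Let G be a group and ω a normalized 3-cocycle on G with comultiplicative phase γ. Then for all g, h, k, x ∈ G: γ_x(g,h)·γ_x(gh,k)·ω(x⁻¹gx, x⁻¹hx, x⁻¹kx) = γ_x(h,k)·γ_x(g,hk)·ω(g,h,k). -/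
/-- The comultiplicative phase `γ_x(g,h)` of a 3-cocycle `ω`. -/
noncomputable def gammaPh {G : Type*} [Group G] (ω : G → G → G → ℂ) (x g h : G) : ℂ :=
  ω g h x * ω x (x⁻¹ * g * x) (x⁻¹ * h * x) / ω g x (x⁻¹ * h * x)

/-- For a normalized 3-cocycle `ω` on `G` with comultiplicative phase `γ`, we have
`γ_x(g,h)·γ_x(gh,k)·ω(x⁻¹gx, x⁻¹hx, x⁻¹kx) = γ_x(h,k)·γ_x(g,hk)·ω(g,h,k)`. -/
theorem gamma_coassoc {G : Type*} [Group G] (ω : G → G → G → ℂ)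
    (habs : ∀ a b c : G, ‖ω a b c‖ = 1)
    (hcoc : ∀ a b c d : G,
      ω a b c * ω a (b * c) d * ω b c d = ω (a * b) c d * ω a b (c * d))
    (hnorm : ∀ g h : G, ω g 1 h = 1) :
    ∀ g h k x : G,
      gammaPh ω x g h * gammaPh ω x (g * h) k
          * ω (x⁻¹ * g * x) (x⁻¹ * h * x) (x⁻¹ * k * x)
        = gammaPh ω x h k * gammaPh ω x g (h * k) * ω g h k := by
  have hne : ∀ a b c : G, ω a b c ≠ 0 := by
    intro a b c h
    have := habs a b c
    rw [h] at this
    simp at this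
  intro g h k x
  set g' := x⁻¹ * g * x with hg'
  set h' := x⁻¹ * h * x with hh'
  set k' := x⁻¹ * k * x with hk'
  have e1 : x * k' = k * x := by rw [hk']; group
  have e2 : x * h' = h * x := by rw [hh']; group
  have e3 : x * g' = g * x := by rw [hg']; group
  have e4 : h' * k' = x⁻¹ * (h * k) * x := by rw [hh', hk']; group
  have e5 : g' * h' = x⁻¹ * (g * h) * x := by rw [hg', hh']; group
  have h1 : ω g h k * ω g (h*k) x * ω h k x = ω (g*h) k x * ω g h (k*x) := hcoc g h k x
  have h2 : ω g h x * ω g (h*x) k' * ω h x k' = ω (g*h) x k' * ω g h (k*x) := by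
    have := hcoc g h x k'
    rwa [e1] at this
  have h3 : ω g x h' * ω g (h*x) k' * ω x h' k'
      = ω (g*x) h' k' * ω g x (h'*k') := by
    have := hcoc g x h' k'
    rwa [e2] at this
  have h4 : ω x g' h' * ω x (g'*h') k' * ω g' h' k'
      = ω (g*x) h' k' * ω x g' (h'*k') := by
    have := hcoc x g' h' k'
    rwa [e3] at this
  unfold gammaPh
  rw [← hg', ← hh', ← hk', ← e4, ← e5]
  field_simp [hne g x h', hne (g*h) x k', hne h x k', hne g x (h'*k')]
  linear_combination
    (ω g h x * ω h x k' * ω (g*h) k x * ω g x (h'*k')) * h4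
    - (ω g h x * ω h x k' * ω (g*h) k x * ω x g' (h'*k')) * h3
    + (ω (g*h) k x * ω x g' (h'*k') * ω g x h' * ω x h' k') * h2
    - (ω x g' (h'*k') * ω g x h' * ω x h' k' * ω (g*h) x k') * h1
end

section
/- Let G be a group and ω a normalized 3-cocycle on G with multiplicative phase θ and comultiplicative phase γ. Then for all g, h, x, y ∈ G: θ_g(x,y)·θ_h(x,y)·γ_x(g,h)·γ_y(x⁻¹gx, x⁻¹hx) = θ_{gh}(x,y)·γ_{xy}(g,h). -/
/-- For a normalized 3-cocycle `ω` on `G` with multiplicative phase `θ` and comultiplicative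
phase `γ`, we have
`θ_g(x,y)·θ_h(x,y)·γ_x(g,h)·γ_y(x⁻¹gx, x⁻¹hx) = θ_{gh}(x,y)·γ_{xy}(g,h)`. -/
theorem theta_gamma_compat {G : Type*} [Group G] (ω : G → G → G → ℂ)
    (habs : ∀ a b c : G, ‖ω a b c‖ = 1)
    (hcoc : ∀ a b c d : G,
      ω a b c * ω a (b * c) d * ω b c d = ω (a * b) c d * ω a b (c * d))
    (hnorm : ∀ g h : G, ω g 1 h = 1) :
    ∀ g h x y : G,
      theta ω g x y * theta ω h x y * gammaPh ω x g h
          * gammaPh ω y (x⁻¹ * g * x) (x⁻¹ * h * x)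
        = theta ω (g * h) x y * gammaPh ω (x * y) g h := by
  intro g h x y
  have hne : ∀ a b c : G, ω a b c ≠ 0 := by
    intro a b c h0
    have := habs a b c
    rw [h0] at this
    simp at this
  have h1 := hcoc g h x y
  have h2 := hcoc g x (x⁻¹ * h * x) y
  have h3 := hcoc g x y ((x*y)⁻¹ * h * (x*y))
  have h4 := hcoc x (x⁻¹ * g * x) (x⁻¹ * h * x) y
  have h5 := hcoc x (x⁻¹ * g * x) y ((x*y)⁻¹ * h * (x*y))
  have h6 := hcoc x y ((x*y)⁻¹ * g * (x*y)) ((x*y)⁻¹ * h * (x*y))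
  unfold theta gammaPh
  simp only [mul_assoc, mul_inv_rev, inv_mul_cancel_left, mul_inv_cancel_left]
    at h1 h2 h3 h4 h5 h6 ⊢
  -- NumL * DenR * (B1 * A2 * B3 * B4 * A5 * B6) = NumR * DenL * (A1 * B2 * A3 * A4 * B5 * A6)
  have key :
      (ω g x y * ω x y (y⁻¹ * (x⁻¹ * (g * (x * y)))) *
       ω h x y * ω x y (y⁻¹ * (x⁻¹ * (h * (x * y)))) *
       ω g h x * ω x (x⁻¹ * (g * x)) (x⁻¹ * (h * x)) *
       ω (x⁻¹ * (g * x)) (x⁻¹ * (h * x)) y *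
       ω y (y⁻¹ * (x⁻¹ * (g * (x * y)))) (y⁻¹ * (x⁻¹ * (h * (x * y)))) *
       ω x (x⁻¹ * (g * (h * x))) y * ω g (x * y) (y⁻¹ * (x⁻¹ * (h * (x * y))))) *
        ((ω (g * h) x y * ω g h (x * y)) *
         (ω g x (x⁻¹ * (h * x)) * (ω g (h * x) y * ω x (x⁻¹ * (h * x)) y)) *
         (ω (g * x) y (y⁻¹ * (x⁻¹ * (h * (x * y)))) * ω g x (x⁻¹ * (h * (x * y)))) *
         (ω (g * x) (x⁻¹ * (h * x)) y * ω x (x⁻¹ * (g * x)) (x⁻¹ * (h * (x * y)))) *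
         (ω x (x⁻¹ * (g * x)) y *
           (ω x (x⁻¹ * (g * (x * y))) (y⁻¹ * (x⁻¹ * (h * (x * y)))) *
             ω (x⁻¹ * (g * x)) y (y⁻¹ * (x⁻¹ * (h * (x * y)))))) *
         (ω (x * y) (y⁻¹ * (x⁻¹ * (g * (x * y)))) (y⁻¹ * (x⁻¹ * (h * (x * y)))) *
           ω x y (y⁻¹ * (x⁻¹ * (g * (h * (x * y))))))) =
      (ω (g * h) x y * ω x y (y⁻¹ * (x⁻¹ * (g * (h * (x * y))))) *
       ω g h (x * y) *
       ω (x * y) (y⁻¹ * (x⁻¹ * (g * (x * y)))) (y⁻¹ * (x⁻¹ * (h * (x * y)))) *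
       ω x (x⁻¹ * (g * x)) y * ω x (x⁻¹ * (h * x)) y *
       ω g x (x⁻¹ * (h * x)) *
       ω (x⁻¹ * (g * x)) y (y⁻¹ * (x⁻¹ * (h * (x * y))))) *
        ((ω g h x * (ω g (h * x) y * ω h x y)) *
         (ω (g * x) (x⁻¹ * (h * x)) y * ω g x (x⁻¹ * (h * (x * y)))) *
         (ω g x y * (ω g (x * y) (y⁻¹ * (x⁻¹ * (h * (x * y)))) *
            ω x y (y⁻¹ * (x⁻¹ * (h * (x * y)))))) *
         (ω x (x⁻¹ * (g * x)) (x⁻¹ * (h * x)) *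
           (ω x (x⁻¹ * (g * (h * x))) y * ω (x⁻¹ * (g * x)) (x⁻¹ * (h * x)) y)) *
         (ω (g * x) y (y⁻¹ * (x⁻¹ * (h * (x * y)))) *
           ω x (x⁻¹ * (g * x)) (x⁻¹ * (h * (x * y)))) *
         (ω x y (y⁻¹ * (x⁻¹ * (g * (x * y)))) *
           (ω x (x⁻¹ * (g * (x * y))) (y⁻¹ * (x⁻¹ * (h * (x * y)))) *
             ω y (y⁻¹ * (x⁻¹ * (g * (x * y)))) (y⁻¹ * (x⁻¹ * (h * (x * y))))))) := by
    ring
  rw [h2, h5] at key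
  rw [h1, h3, h4, h6] at key
  have heq := mul_right_cancel₀ (by apply_rules [mul_ne_zero, hne]) key
  simp only [div_mul_div_comm]
  rw [div_eq_div_iff (by apply_rules [mul_ne_zero, hne]) (by apply_rules [mul_ne_zero, hne])]
  linear_combination heq
end

section
/- Let k be a field and G, H groups. For every bialgebra homomorphism f from the group Hopf algebra k[G] to the group Hopf algebra k[H] there exists a group homomorphism φ : G → H such that f(g) = φ(g) for all g ∈ G, where group elements are identified with their canonical images in the group algebras. -/
open TensorProduct
open scoped Classical

/-- The comultiplication of the group Hopf algebra `k[G]`, the algebra map determined by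
`g ↦ g ⊗ g`. -/
noncomputable def groupComul (k : Type*) [Field k] (G : Type*) [Group G] :
    MonoidAlgebra k G →ₐ[k] MonoidAlgebra k G ⊗[k] MonoidAlgebra k G :=
  MonoidAlgebra.lift k _ G
    { toFun := fun g => MonoidAlgebra.of k G g ⊗ₜ[k] MonoidAlgebra.of k G g
      map_one' := by simp [Algebra.TensorProduct.one_def, ← MonoidAlgebra.one_def]
      map_mul' := fun g h => by
        simp [Algebra.TensorProduct.tmul_mul_tmul] }

/-- The counit of the group Hopf algebra `k[G]`, the algebra map determined by `g ↦ 1`. -/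
noncomputable def groupCounit (k : Type*) [Field k] (G : Type*) [Group G] :
    MonoidAlgebra k G →ₐ[k] k :=
  MonoidAlgebra.lift k k G 1

noncomputable def coefT (k : Type*) [Field k] (H : Type*) [Group H] (h1 h2 : H) :
    MonoidAlgebra k H ⊗[k] MonoidAlgebra k H →ₗ[k] k :=
  TensorProduct.lift (LinearMap.mk₂ k (fun x y => x.coeff h1 * y.coeff h2)
    (fun x x' y => by
      have h : (x + x').coeff h1 = x.coeff h1 + x'.coeff h1 := rfl
      rw [h]; ring)
    (fun c x y => by
      have h : (c • x).coeff h1 = c * x.coeff h1 := rfl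
      rw [h, smul_eq_mul]; ring)
    (fun x y y' => by
      have h : (y + y').coeff h2 = y.coeff h2 + y'.coeff h2 := rfl
      rw [h]; ring)
    (fun c x y => by
      have h : (c • y).coeff h2 = c * y.coeff h2 := rfl
      rw [h, smul_eq_mul]; ring))

lemma coefT_tmul {k : Type*} [Field k] {H : Type*} [Group H] (h1 h2 : H)
    (x y : MonoidAlgebra k H) : coefT k H h1 h2 (x ⊗ₜ y) = x.coeff h1 * y.coeff h2 := rfl

lemma coefT_comul {k : Type*} [Field k] {H : Type*} [Group H] (h1 h2 : H)
    (x : MonoidAlgebra k H) :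
    coefT k H h1 h2 (groupComul k H x) = if h1 = h2 then x.coeff h1 else 0 := by
  have hx : x = x.coeff.sum fun h c => MonoidAlgebra.single h c := (MonoidAlgebra.sum_coeff_single x).symm
  nth_rewrite 1 [hx]
  rw [map_finsuppSum, map_finsuppSum]
  have key : ∀ h c, coefT k H h1 h2 (groupComul k H (MonoidAlgebra.single h c)) =
      if h = h1 ∧ h = h2 then c else 0 := by
    intro h c
    have hs : (MonoidAlgebra.single h c : MonoidAlgebra k H) = c • MonoidAlgebra.of k H h := by
      simp [MonoidAlgebra.of_apply, MonoidAlgebra.smul_single]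
    rw [hs, map_smul, map_smul]
    have hof : groupComul k H (MonoidAlgebra.of k H h) =
        MonoidAlgebra.of k H h ⊗ₜ[k] MonoidAlgebra.of k H h := by
      simp [groupComul]
    rw [hof, smul_eq_mul, coefT_tmul]
    simp only [MonoidAlgebra.of_apply, MonoidAlgebra.coeff_single, Finsupp.single_apply]
    by_cases e1 : h = h1 <;> by_cases e2 : h = h2 <;> simp [e1, e2]
  simp only [key]
  by_cases h12 : h1 = h2
  · subst h12
    simp only [and_self, if_pos]
    rw [Finsupp.sum_ite_eq' x.coeff h1 (fun _ b => b)]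
    by_cases hm : h1 ∈ x.coeff.support
    · rw [if_pos hm]
    · rw [if_neg hm, Finsupp.notMem_support_iff.mp hm]
  · rw [if_neg h12, Finsupp.sum]
    apply Finset.sum_eq_zero
    intro a _
    rw [if_neg]
    rintro ⟨rfl, rfl⟩
    exact h12 rfl

lemma counit_eq_sum {k : Type*} [Field k] {H : Type*} [Group H] (x : MonoidAlgebra k H) :
    groupCounit k H x = x.coeff.sum fun _ c => c := by
  rw [groupCounit, MonoidAlgebra.lift_apply]
  simp

lemma grouplike {k : Type*} [Field k] {H : Type*} [Group H] (x : MonoidAlgebra k H)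
    (hΔ : groupComul k H x = x ⊗ₜ[k] x) (hε : groupCounit k H x = 1) :
    ∃ h : H, x = MonoidAlgebra.of k H h := by
  have key : ∀ h1 h2 : H, x.coeff h1 * x.coeff h2 = if h1 = h2 then x.coeff h1 else 0 := by
    intro h1 h2
    have := coefT_comul h1 h2 x
    rw [hΔ, coefT_tmul] at this
    exact this
  have hsum : (x.coeff.sum fun _ c => c) = 1 := by rw [← counit_eq_sum, hε]
  have hxne : x ≠ 0 := by
    intro h0; rw [h0] at hsum; simp at hsum
  obtain ⟨h0, hh0⟩ : ∃ a, x.coeff a ≠ 0 := by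
    by_contra hc
    push_neg at hc
    exact hxne (MonoidAlgebra.coeff_injective (Finsupp.ext hc))
  have hx0 : x.coeff h0 = 1 := by
    have h := key h0 h0
    rw [if_pos rfl] at h
    have := mul_left_cancel₀ hh0 (h.trans (mul_one (x.coeff h0)).symm)
    exact this
  refine ⟨h0, MonoidAlgebra.coeff_injective (Finsupp.ext fun h => ?_)⟩
  rw [MonoidAlgebra.of_apply, MonoidAlgebra.coeff_single, Finsupp.single_apply]
  by_cases e : h0 = h
  · subst e; simpa using hx0
  · have hk := key h0 h
    rw [if_neg e, hx0, one_mul] at hk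
    rw [hk, if_neg e]

/-- Every bialgebra homomorphism `k[G] → k[H]` of group Hopf algebras comes from a group
homomorphism `φ : G → H`, i.e. `f(g) = φ(g)` for all `g ∈ G` (identifying group elements
with their canonical images in the group algebras). -/
theorem bialgHom_groupAlgebra_eq_monoidHom {k : Type*} [Field k]
    {G H : Type*} [Group G] [Group H]
    (f : MonoidAlgebra k G →ₐ[k] MonoidAlgebra k H)
    (hcomul : ∀ a : MonoidAlgebra k G,
      groupComul k H (f a) = Algebra.TensorProduct.map f f (groupComul k G a))
    (hcounit : ∀ a : MonoidAlgebra k G, groupCounit k H (f a) = groupCounit k G a) :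
    ∃ φ : G →* H, ∀ g : G,
      f (MonoidAlgebra.of k G g) = MonoidAlgebra.of k H (φ g) := by
  have hg : ∀ g : G, ∃ h : H, f (MonoidAlgebra.of k G g) = MonoidAlgebra.of k H h := by
    intro g
    apply grouplike
    · rw [hcomul]
      have : groupComul k G (MonoidAlgebra.of k G g) =
          MonoidAlgebra.of k G g ⊗ₜ[k] MonoidAlgebra.of k G g := by
        simp [groupComul]
      rw [this]
      simp
    · rw [hcounit]
      simp [groupCounit]
  choose φ hφ using hg
  have hinj : Function.Injective (MonoidAlgebra.of k H) := fun a b hab =>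
    MonoidAlgebra.single_left_injective (one_ne_zero : (1:k) ≠ 0) hab
  refine ⟨⟨⟨φ, ?_⟩, ?_⟩, hφ⟩
  · apply hinj
    rw [← hφ 1]
    show f (MonoidAlgebra.of k G 1) = MonoidAlgebra.of k H 1
    rw [map_one (MonoidAlgebra.of k G), map_one f, map_one (MonoidAlgebra.of k H)]
  · intro a b
    apply hinj
    dsimp only [OneHom.toFun_eq_coe, OneHom.coe_mk]
    rw [map_mul (MonoidAlgebra.of k H), ← hφ a, ← hφ b, ← map_mul f,
      ← map_mul (MonoidAlgebra.of k G), hφ (a * b)]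
end

section
/- Let A and B be finite abelian groups and p : A × B → ℂ satisfy the unitality, counitality, multiplicativity, comultiplicativity, and nondegeneracy conditions. Then |A| = |B|, p(a,1) = 1/|A| and p(1,b) = 1/|A| for all a ∈ A, b ∈ B, and |p(a,b)| = 1/|A| for all a ∈ A, b ∈ B. -/
section Aux

variable {A B : Type*} [CommGroup A] [CommGroup B] [Fintype A] [Fintype B]
    [DecidableEq A] [DecidableEq B]

lemma aux_li (p : A → B → ℂ)
    (hMul : ∀ (x y : A) (b : B),
      ∑ t : B, p x (b * t⁻¹) * p y t = if x = y then p x b else 0)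
    (hNdgA : ∀ a : A, ∃ b : B, p a b ≠ 0) :
    LinearIndependent ℂ p := by
  rw [Fintype.linearIndependent_iff]
  intro g hg y
  obtain ⟨b, hb⟩ := hNdgA y
  have h1 : ∀ t : B, ∑ x : A, g x * p x t = 0 := by
    intro t
    have := congrFun hg t
    simpa [Finset.sum_apply] using this
  have key : g y * p y b = 0 := by
    have : ∑ x : A, g x * (if y = x then p y b else 0) = 0 := by
      calc ∑ x : A, g x * (if y = x then p y b else 0)
          = ∑ x : A, g x * ∑ t : B, p y (b * t⁻¹) * p x t := by
            refine Finset.sum_congr rfl fun x _ => ?_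
            rw [hMul y x b]
        _ = ∑ x : A, ∑ t : B, p y (b * t⁻¹) * (g x * p x t) := by
            refine Finset.sum_congr rfl fun x _ => ?_
            rw [Finset.mul_sum]
            exact Finset.sum_congr rfl fun t _ => by ring
        _ = ∑ t : B, p y (b * t⁻¹) * ∑ x : A, g x * p x t := by
            rw [Finset.sum_comm]
            exact Finset.sum_congr rfl fun t _ => (Finset.mul_sum _ _ _).symm
        _ = 0 := by simp [h1]
    simpa using this
  exact (mul_eq_zero.mp key).resolve_right hb

lemma aux_card_le (p : A → B → ℂ)
    (hMul : ∀ (x y : A) (b : B),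
      ∑ t : B, p x (b * t⁻¹) * p y t = if x = y then p x b else 0)
    (hNdgA : ∀ a : A, ∃ b : B, p a b ≠ 0) :
    Fintype.card A ≤ Fintype.card B := by
  have := (aux_li p hMul hNdgA).fintype_card_le_finrank
  rwa [Module.finrank_fintype_fun_eq_card] at this

lemma aux_main (p : A → B → ℂ)
    (hMul : ∀ (x y : A) (b : B),
      ∑ t : B, p x (b * t⁻¹) * p y t = if x = y then p x b else 0)
    (hNdgA : ∀ a : A, ∃ b : B, p a b ≠ 0)
    (hcard : Fintype.card A = Fintype.card B) :
    (∀ a : A, p a 1 = 1 / (Fintype.card B : ℂ)) ∧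
    (∀ (a : A) (b : B), ‖p a b‖ = 1 / (Fintype.card B : ℝ)) := by
  have li := aux_li p hMul hNdgA
  have : Nonempty A := ⟨1⟩
  have hceq : Fintype.card A = Module.finrank ℂ (B → ℂ) := by
    rw [Module.finrank_fintype_fun_eq_card]; exact hcard
  set Bs := basisOfLinearIndependentOfCardEqFinrank li hceq with hBs
  have hBsc : ⇑Bs = p := coe_basisOfLinearIndependentOfCardEqFinrank li hceq
  -- translation property
  have trans : ∀ (x : A) (b : B), ∃ l : ℂ, ∀ c : B, p x (c * b) = l * p x c := by
    intro x b
    set f : B → ℂ := fun c => p x (c * b) with hf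
    refine ⟨Bs.repr f x, fun c => ?_⟩
    have hsum : ∀ c : B, f c = ∑ y : A, Bs.repr f y * p y c := by
      intro c
      conv_lhs => rw [← Bs.sum_repr f]
      simp [hBsc, Finset.sum_apply]
    -- key : coefficients formula
    have key : ∀ (z : A) (d : B),
        Bs.repr f z * p z d = if z = x then p x (d * b) else 0 := by
      intro z d
      have way2 : ∑ t : B, p z (d * t⁻¹) * f t = if z = x then p z (d * b) else 0 := by
        have := hMul z x (d * b)
        rw [← this]
        refine Fintype.sum_equiv (Equiv.mulRight b) _ _ fun t => ?_
        simp only [hf, Equiv.coe_mulRight]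
        congr 2
        group
      have way1 : ∑ t : B, p z (d * t⁻¹) * f t = Bs.repr f z * p z d := by
        calc ∑ t : B, p z (d * t⁻¹) * f t
            = ∑ t : B, ∑ y : A, Bs.repr f y * (p z (d * t⁻¹) * p y t) := by
              refine Finset.sum_congr rfl fun t _ => ?_
              rw [hsum t, Finset.mul_sum]
              exact Finset.sum_congr rfl fun y _ => by ring
          _ = ∑ y : A, Bs.repr f y * ∑ t : B, p z (d * t⁻¹) * p y t := by
              rw [Finset.sum_comm]
              exact Finset.sum_congr rfl fun y _ => (Finset.mul_sum _ _ _).symm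
          _ = ∑ y : A, Bs.repr f y * (if z = y then p z d else 0) := by
              refine Finset.sum_congr rfl fun y _ => by rw [hMul z y d]
          _ = Bs.repr f z * p z d := by simp
      rw [← way1, way2]
      by_cases h : z = x <;> simp [h]
    have hz : ∀ z : A, z ≠ x → Bs.repr f z = 0 := by
      intro z hzx
      obtain ⟨d, hd⟩ := hNdgA z
      have := key z d
      rw [if_neg hzx] at this
      exact (mul_eq_zero.mp this).resolve_right hd
    calc p x (c * b) = f c := rfl
      _ = ∑ y : A, Bs.repr f y * p y c := hsum c
      _ = Bs.repr f x * p x c := by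
          refine Finset.sum_eq_single x (fun y _ hyx => ?_) (by simp)
          rw [hz y hyx, zero_mul]
  -- now derive the values
  have hn0 : (Fintype.card B : ℂ) ≠ 0 := by
    exact_mod_cast Nat.cast_ne_zero.mpr Fintype.card_ne_zero
  have main : ∀ x : A, p x 1 = 1 / (Fintype.card B : ℂ) ∧
      ∀ b : B, ‖p x b‖ = 1 / (Fintype.card B : ℝ) := by
    intro x
    choose lam hlam using trans x
    have hx1 : p x 1 ≠ 0 := by
      intro h0
      obtain ⟨b, hb⟩ := hNdgA x
      apply hb
      have := hlam b 1
      rwa [one_mul, h0, mul_zero] at this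
    -- each term p x t⁻¹ * p x t = (p x 1)^2
    have hterm : ∀ t : B, p x t⁻¹ * p x t = p x 1 * p x 1 := by
      intro t
      have h1 : p x t = lam t * p x 1 := by
        have := hlam t 1; rwa [one_mul] at this
      have h2 : lam t * p x t⁻¹ = p x 1 := by
        have := hlam t t⁻¹; rw [inv_mul_cancel] at this; exact this.symm
      calc p x t⁻¹ * p x t = (lam t * p x t⁻¹) * p x 1 := by rw [h1]; ring
        _ = p x 1 * p x 1 := by rw [h2]
    have hsum1 : (Fintype.card B : ℂ) * (p x 1 * p x 1) = p x 1 := by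
      have := hMul x x 1
      rw [if_pos rfl] at this
      calc (Fintype.card B : ℂ) * (p x 1 * p x 1)
          = ∑ t : B, p x (1 * t⁻¹) * p x t := by
            rw [Finset.sum_congr rfl fun t _ => by rw [one_mul, hterm t]]
            simp [Finset.sum_const, mul_comm]
        _ = p x 1 := this
    have hkey : (Fintype.card B : ℂ) * p x 1 = 1 := by
      apply mul_right_cancel₀ hx1
      rw [one_mul]
      linear_combination hsum1
    have hp1 : p x 1 = 1 / (Fintype.card B : ℂ) := by
      field_simp
      linear_combination hkey
    refine ⟨hp1, fun b => ?_⟩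
    -- lam is a homomorphism
    have hlam1 : lam 1 = 1 := by
      have := hlam 1 1
      rw [mul_one] at this
      exact mul_right_cancel₀ hx1 (by rw [one_mul]; exact this.symm)
    have hlammul : ∀ b c : B, lam (b * c) = lam b * lam c := by
      intro b c
      have h1 : p x (b * c) = lam (b * c) * p x 1 := by
        have := hlam (b * c) 1; rwa [one_mul] at this
      have h2 : p x (b * c) = lam c * (lam b * p x 1) := by
        have hb' : p x b = lam b * p x 1 := by
          have := hlam b 1; rwa [one_mul] at this
        have := hlam c b
        rw [hb'] at this
        exact this
      apply mul_right_cancel₀ hx1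
      rw [← h1, h2]; ring
    have hlampow : ∀ (k : ℕ) (b : B), lam (b ^ k) = lam b ^ k := by
      intro k
      induction k with
      | zero => intro b; simpa using hlam1
      | succ n ih => intro b; rw [pow_succ, pow_succ, hlammul, ih]
    have habs : ‖lam b‖ = 1 := by
      have hpow : lam b ^ Fintype.card B = 1 := by
        rw [← hlampow, pow_card_eq_one, hlam1]
      have habs' : ‖lam b‖ ^ Fintype.card B = 1 := by
        rw [← norm_pow, hpow, norm_one]
      have hnn : (0:ℝ) ≤ ‖lam b‖ := norm_nonneg _
      rcases lt_trichotomy (‖lam b‖) 1 with h | h | h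
      · exfalso
        have := pow_lt_one₀ hnn h (Fintype.card_ne_zero (α := B))
        rw [habs'] at this; exact lt_irrefl _ this
      · exact h
      · exfalso
        have := one_lt_pow₀ h (Fintype.card_ne_zero (α := B))
        rw [habs'] at this; exact lt_irrefl _ this
    have hb1 : p x b = lam b * p x 1 := by
      have := hlam b 1; rwa [one_mul] at this
    rw [hb1, norm_mul, habs, one_mul, hp1]
    rw [norm_div]
    simp
  exact ⟨fun a => (main a).1, fun a b => (main a).2 b⟩

end Aux

/-- Let `A, B` be finite abelian groups and `p : A × B → ℂ` satisfy the unitality,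
counitality, multiplicativity, comultiplicativity and nondegeneracy conditions (i.e. the
coefficients of a Hopf algebra morphism `ℂ^A → ℂ[B]` with associated subgroups all of `A`
and `B`).  Then `|A| = |B|`, `p(a,1) = 1/|A|` and `p(1,b) = 1/|A|` for all `a ∈ A`,
`b ∈ B`, and `|p(a,b)| = 1/|A|` for all `a ∈ A`, `b ∈ B`. -/
theorem p_norms {A B : Type*} [CommGroup A] [CommGroup B] [Fintype A] [Fintype B]
    [DecidableEq A] [DecidableEq B] (p : A → B → ℂ)
    (hUnit : ∀ b : B, ∑ a : A, p a b = if b = 1 then 1 else 0)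
    (hCounit : ∀ a : A, ∑ b : B, p a b = if a = 1 then 1 else 0)
    (hMul : ∀ (x y : A) (b : B),
      ∑ t : B, p x (b * t⁻¹) * p y t = if x = y then p x b else 0)
    (hComul : ∀ (x : A) (b c : B),
      ∑ t : A, p (x * t⁻¹) b * p t c = if b = c then p x b else 0)
    (hNdgA : ∀ a : A, ∃ b : B, p a b ≠ 0)
    (hNdgB : ∀ b : B, ∃ a : A, p a b ≠ 0) :
    Fintype.card A = Fintype.card B ∧
    (∀ a : A, p a 1 = 1 / (Fintype.card A : ℂ)) ∧
    (∀ b : B, p 1 b = 1 / (Fintype.card A : ℂ)) ∧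
    (∀ (a : A) (b : B), ‖p a b‖ = 1 / (Fintype.card A : ℝ)) := by
  set p' : B → A → ℂ := fun b a => p a b with hp'
  have hMul' : ∀ (x y : B) (b : A),
      ∑ t : A, p' x (b * t⁻¹) * p' y t = if x = y then p' x b else 0 := by
    intro x y b
    exact hComul b x y
  have hle1 : Fintype.card A ≤ Fintype.card B := aux_card_le p hMul hNdgA
  have hle2 : Fintype.card B ≤ Fintype.card A := aux_card_le p' hMul' hNdgB
  have hcard : Fintype.card A = Fintype.card B := le_antisymm hle1 hle2
  obtain ⟨h1, h4⟩ := aux_main p hMul hNdgA hcard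
  obtain ⟨h3, _⟩ := aux_main p' hMul' hNdgB hcard.symm
  refine ⟨hcard, fun a => ?_, fun b => ?_, fun a b => ?_⟩
  · rw [h1 a, hcard]
  · exact h3 b
  · rw [h4 a b, hcard]
end

section
/- Let A and B be finite abelian groups and p : A × B → ℂ satisfy the unitality, counitality, multiplicativity, comultiplicativity, and nondegeneracy conditions. Then p(a, b·c) = |A|·p(a,b)·p(a,c) for all a ∈ A and b, c ∈ B, and p(a·x, b) = |A|·p(a,b)·p(x,b) for all a, x ∈ A and b ∈ B. -/
private lemma p_swap_helper {A B : Type*} [Group A] [Fintype A] [Fintype B] [DecidableEq B]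
    (p : A → B → ℂ)
    (hComul : ∀ (x : A) (b c : B),
      ∑ t : A, p (x * t⁻¹) b * p t c = if b = c then p x b else 0)
    (c : B → ℂ) (x : A) (b0 : B) :
    ∑ t : A, (∑ b : B, c b * p (x * t⁻¹) b) * p t b0 = c b0 * p x b0 := by
  have h : ∑ t : A, (∑ b : B, c b * p (x * t⁻¹) b) * p t b0
      = ∑ b : B, c b * ∑ t : A, p (x * t⁻¹) b * p t b0 := by
    simp_rw [Finset.sum_mul, Finset.mul_sum, mul_assoc]
    exact Finset.sum_comm
  rw [h]
  simp_rw [hComul]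
  simp

private lemma p_li {A B : Type*} [Group A] [Fintype A] [Fintype B] [DecidableEq B]
    (p : A → B → ℂ)
    (hComul : ∀ (x : A) (b c : B),
      ∑ t : A, p (x * t⁻¹) b * p t c = if b = c then p x b else 0)
    (hNdgB : ∀ b : B, ∃ a : A, p a b ≠ 0) :
    LinearIndependent ℂ (fun b : B => fun a : A => p a b) := by
  rw [Fintype.linearIndependent_iff]
  intro g hg b0
  obtain ⟨a0, ha0⟩ := hNdgB b0
  have hg' : ∀ y : A, ∑ b : B, g b * p y b = 0 := by
    intro y
    have h := congrFun hg y
    simpa using h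
  have key := p_swap_helper p hComul g a0 b0
  rw [show (∑ t : A, (∑ b : B, g b * p (a0 * t⁻¹) b) * p t b0) = 0 by
      simp [hg']] at key
  exact (mul_eq_zero.mp key.symm).resolve_right ha0

private lemma p_eigen {A B : Type*} [CommGroup A] [Fintype A] [Fintype B] [Nonempty B]
    [DecidableEq A] [DecidableEq B]
    (p : A → B → ℂ)
    (hcard : Fintype.card B = Fintype.card A)
    (hComul : ∀ (x : A) (b c : B),
      ∑ t : A, p (x * t⁻¹) b * p t c = if b = c then p x b else 0)
    (hNdgB : ∀ b : B, ∃ a : A, p a b ≠ 0) :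
    ∀ (s : A) (b0 : B), ∃ c : ℂ, ∀ x : A, p (s * x) b0 = c * p x b0 := by
  have li := p_li p hComul hNdgB
  have hfr : Fintype.card B = Module.finrank ℂ (A → ℂ) := by
    simp [hcard]
  let bas := basisOfLinearIndependentOfCardEqFinrank li hfr
  intro s b0
  set d : A → ℂ := fun a => if a = s⁻¹ then 1 else 0 with hd
  refine ⟨bas.repr d b0, fun x => ?_⟩
  have hrep : (∑ b : B, bas.repr d b • (fun a : A => p a b)) = d := by
    have h := bas.sum_repr d
    simpa [bas, coe_basisOfLinearIndependentOfCardEqFinrank] using h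
  have hrep' : ∀ y : A, ∑ b : B, bas.repr d b * p y b = d y := by
    intro y
    have h := congrFun hrep y
    simpa using h
  have key := p_swap_helper p hComul (fun b => bas.repr d b) x b0
  simp_rw [hrep'] at key
  rw [← key]
  have hiff : ∀ t : A, x * t⁻¹ = s⁻¹ ↔ t = s * x := by
    intro t
    rw [mul_inv_eq_iff_eq_mul, eq_inv_mul_iff_mul_eq]
    exact eq_comm
  have : ∀ t : A, d (x * t⁻¹) = if t = s * x then 1 else 0 := by
    intro t
    simp only [hd]
    rw [if_congr (hiff t) rfl rfl]
  simp_rw [this]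
  simp

private lemma p_half {A B : Type*} [CommGroup A] [Fintype A] [Fintype B] [Nonempty B]
    [DecidableEq A] [DecidableEq B]
    (p : A → B → ℂ)
    (hcard : Fintype.card B = Fintype.card A)
    (hComul : ∀ (x : A) (b c : B),
      ∑ t : A, p (x * t⁻¹) b * p t c = if b = c then p x b else 0)
    (hNdgB : ∀ b : B, ∃ a : A, p a b ≠ 0) :
    ∀ (a x : A) (b : B), p (a * x) b = (Fintype.card A : ℂ) * p a b * p x b := by
  have eig := p_eigen p hcard hComul hNdgB
  have key2 : ∀ (a x : A) (b : B), p (a * x) b * p 1 b = p a b * p x b := by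
    intro a x b
    obtain ⟨c, hc⟩ := eig a b
    have h1 := hc x
    have h2 := hc 1
    rw [mul_one] at h2
    rw [h1, h2]; ring
  have hp1 : ∀ b : B, p 1 b ≠ 0 := by
    intro b hb
    obtain ⟨a, ha⟩ := hNdgB b
    have h := key2 a a b
    rw [hb, mul_zero] at h
    exact ha (mul_self_eq_zero.mp h.symm)
  have hcardp : ∀ b : B, (Fintype.card A : ℂ) * p 1 b = 1 := by
    intro b
    have h := hComul 1 b b
    simp only [one_mul, eq_self_iff_true, if_true] at h
    have hconst : ∀ t : A, p t⁻¹ b * p t b = p 1 b * p 1 b := by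
      intro t
      have h2 := key2 t⁻¹ t b
      rw [inv_mul_cancel] at h2
      exact h2.symm
    rw [Finset.sum_congr rfl (fun t _ => hconst t)] at h
    rw [Finset.sum_const, Finset.card_univ, nsmul_eq_mul] at h
    apply mul_right_cancel₀ (hp1 b)
    rw [one_mul, mul_assoc]
    exact h
  intro a x b
  calc p (a * x) b = ((Fintype.card A : ℂ) * p 1 b) * p (a * x) b := by
        rw [hcardp b, one_mul]
    _ = (Fintype.card A : ℂ) * (p (a * x) b * p 1 b) := by ring
    _ = (Fintype.card A : ℂ) * (p a b * p x b) := by rw [key2]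
    _ = (Fintype.card A : ℂ) * p a b * p x b := by ring

/-- Under the unitality, counitality, multiplicativity, comultiplicativity and
nondegeneracy conditions: `p(a, b·c) = |A|·p(a,b)·p(a,c)` for all `a ∈ A`, `b, c ∈ B`, and
`p(a·x, b) = |A|·p(a,b)·p(x,b)` for all `a, x ∈ A`, `b ∈ B`. -/
theorem p_simpler {A B : Type*} [CommGroup A] [CommGroup B] [Fintype A] [Fintype B]
    [DecidableEq A] [DecidableEq B] (p : A → B → ℂ)
    (hUnit : ∀ b : B, ∑ a : A, p a b = if b = 1 then 1 else 0)
    (hCounit : ∀ a : A, ∑ b : B, p a b = if a = 1 then 1 else 0)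
    (hMul : ∀ (x y : A) (b : B),
      ∑ t : B, p x (b * t⁻¹) * p y t = if x = y then p x b else 0)
    (hComul : ∀ (x : A) (b c : B),
      ∑ t : A, p (x * t⁻¹) b * p t c = if b = c then p x b else 0)
    (hNdgA : ∀ a : A, ∃ b : B, p a b ≠ 0)
    (hNdgB : ∀ b : B, ∃ a : A, p a b ≠ 0) :
    (∀ (a : A) (b c : B),
      p a (b * c) = (Fintype.card A : ℂ) * p a b * p a c) ∧
    (∀ (a x : A) (b : B),
      p (a * x) b = (Fintype.card A : ℂ) * p a b * p x b) := by
  have liA := p_li p hComul hNdgB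
  have liB := p_li (fun b a => p a b) (fun x b c => hMul b c x) hNdgA
  have cardBA : Fintype.card B ≤ Fintype.card A := by
    have h := liA.fintype_card_le_finrank
    simpa using h
  have cardAB : Fintype.card A ≤ Fintype.card B := by
    have h := liB.fintype_card_le_finrank
    simpa using h
  have hcard : Fintype.card A = Fintype.card B := le_antisymm cardAB cardBA
  constructor
  · intro a b c
    have h := p_half (fun b a => p a b) hcard (fun x b c => hMul b c x) hNdgA b c a
    simpa [hcard] using h
  · exact p_half p hcard.symm hComul hNdgB
end

section
/- Let A and B be finite abelian groups and p : A × B → ℂ satisfy the unitality, counitality, multiplicativity, comultiplicativity, and nondegeneracy conditions. Then p(a, b⁻¹) equals the complex conjugate of p(a,b) for all a ∈ A and b ∈ B. -/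
/-- Under the unitality, counitality, multiplicativity, comultiplicativity and
nondegeneracy conditions: `p(a, b⁻¹)` is the complex conjugate of `p(a,b)` for all
`a ∈ A`, `b ∈ B`. -/
theorem p_inv_conj {A B : Type*} [CommGroup A] [CommGroup B] [Fintype A] [Fintype B]
    [DecidableEq A] [DecidableEq B] (p : A → B → ℂ)
    (hUnit : ∀ b : B, ∑ a : A, p a b = if b = 1 then 1 else 0)
    (hCounit : ∀ a : A, ∑ b : B, p a b = if a = 1 then 1 else 0)
    (hMul : ∀ (x y : A) (b : B),
      ∑ t : B, p x (b * t⁻¹) * p y t = if x = y then p x b else 0)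
    (hComul : ∀ (x : A) (b c : B),
      ∑ t : A, p (x * t⁻¹) b * p t c = if b = c then p x b else 0)
    (hNdgA : ∀ a : A, ∃ b : B, p a b ≠ 0)
    (hNdgB : ∀ b : B, ∃ a : A, p a b ≠ 0) :
    ∀ (a : A) (b : B), p a b⁻¹ = (starRingEnd ℂ) (p a b) := by
  classical
  intro a b
  haveI : NeZero ((Monoid.exponent B : ℂ)) :=
    ⟨Nat.cast_ne_zero.mpr Monoid.exponent_ne_zero_of_finite⟩
  obtain ⟨e⟩ := CommGroup.monoidHom_mulEquiv_of_hasEnoughRootsOfUnity B ℂ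
  haveI : Fintype (B →* ℂˣ) := Fintype.ofEquiv B e.symm.toEquiv
  -- characters have values of norm one
  have hnorm : ∀ (χ : B →* ℂˣ) (c : B), ‖(χ c : ℂ)‖ = 1 := by
    intro χ c
    refine Complex.norm_eq_one_of_pow_eq_one (n := Fintype.card B) ?_ Fintype.card_ne_zero
    rw [← Units.val_pow_eq_pow_val, ← map_pow, pow_card_eq_one, map_one, Units.val_one]
  have hconj : ∀ (χ : B →* ℂˣ) (c : B), (starRingEnd ℂ) (χ c : ℂ) = (χ c⁻¹ : ℂ) := by
    intro χ c
    rw [← Complex.inv_eq_conj (hnorm χ c), map_inv, ← Units.val_inv_eq_inv_val]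
  -- second orthogonality relation
  have horth : ∀ c : B, ∑ χ : B →* ℂˣ, (χ c : ℂ) =
      if c = 1 then (Fintype.card B : ℂ) else 0 := by
    intro c
    by_cases hc : c = 1
    · simp [hc, Fintype.card_congr e.toEquiv]
    · rw [if_neg hc]
      obtain ⟨χ₀, hχ₀⟩ := CommGroup.exists_apply_ne_one_of_hasEnoughRootsOfUnity B ℂ hc
      have hshift : (χ₀ c : ℂ) * ∑ χ : B →* ℂˣ, (χ c : ℂ) = ∑ χ : B →* ℂˣ, (χ c : ℂ) := by
        rw [Finset.mul_sum]
        refine Fintype.sum_bijective (χ₀ * ·) (Group.mulLeft_bijective χ₀)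
          (fun χ => (χ₀ c : ℂ) * (χ c : ℂ)) (fun χ => (χ c : ℂ)) (fun χ => ?_)
        simp
      have hne : (χ₀ c : ℂ) ≠ 1 := fun h => hχ₀ (Units.ext (by simpa using h))
      have h0 : ((χ₀ c : ℂ) - 1) * ∑ χ : B →* ℂˣ, (χ c : ℂ) = 0 := by
        rw [sub_one_mul, hshift, sub_self]
      rcases mul_eq_zero.mp h0 with h | h
      · exact absurd (by linear_combination h) hne
      · exact h
  -- Fourier coefficients
  set F : (B →* ℂˣ) → ℂ := fun χ => ∑ c : B, p a c * (χ c : ℂ) with hF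
  have hFidem : ∀ χ, F χ * F χ = F χ := by
    intro χ
    have h1 : F χ * F χ = ∑ t : B, ∑ c : B, (p a c * p a t) * ((χ (c * t) : ℂ)) := by
      rw [hF, Finset.sum_mul_sum, Finset.sum_comm]
      refine Finset.sum_congr rfl fun t _ => Finset.sum_congr rfl fun c _ => ?_
      rw [map_mul]; push_cast; ring
    have h2 : F χ = ∑ t : B, ∑ c : B, (p a c * p a t) * ((χ (c * t) : ℂ)) := by
      rw [hF]
      have key : ∀ d : B, p a d * (χ d : ℂ) = ∑ t : B, (p a (d * t⁻¹) * p a t) * (χ d : ℂ) := by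
        intro d
        rw [← Finset.sum_mul, hMul a a d, if_pos rfl]
      simp only [key]
      rw [Finset.sum_comm]
      refine Finset.sum_congr rfl fun t _ => ?_
      refine Fintype.sum_equiv (Equiv.mulRight t⁻¹)
        (fun d => (p a (d * t⁻¹) * p a t) * (χ d : ℂ))
        (fun c => (p a c * p a t) * (χ (c * t) : ℂ)) (fun d => ?_)
      simp only [Equiv.coe_mulRight, inv_mul_cancel_right]
    rw [h1, h2]
  have hreal : ∀ χ, (starRingEnd ℂ) (F χ) = F χ := by
    intro χ
    have h : F χ * (F χ - 1) = 0 := by rw [mul_sub, hFidem χ, mul_one, sub_self]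
    rcases mul_eq_zero.mp h with h | h
    · simp [h]
    · have : F χ = 1 := by linear_combination h
      simp [this]
  -- two evaluations of ∑ χ, F χ * χ b
  have hA : ∑ χ : B →* ℂˣ, F χ * (χ b : ℂ) = (Fintype.card B : ℂ) * p a b⁻¹ := by
    simp only [hF, Finset.sum_mul]
    rw [Finset.sum_comm]
    have key : ∀ c : B, ∑ χ : B →* ℂˣ, p a c * (χ c : ℂ) * (χ b : ℂ)
        = p a c * ∑ χ : B →* ℂˣ, (χ (c * b) : ℂ) := by
      intro c
      rw [Finset.mul_sum]
      refine Finset.sum_congr rfl fun χ _ => ?_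
      rw [map_mul]; push_cast; ring
    simp only [key, horth]
    rw [Finset.sum_eq_single b⁻¹]
    · rw [if_pos (inv_mul_cancel b), mul_comm]
    · intro c _ hcne
      rw [if_neg (fun h => hcne (eq_inv_of_mul_eq_one_left h)), mul_zero]
    · intro h; exact absurd (Finset.mem_univ _) h
  have hB : ∑ χ : B →* ℂˣ, F χ * (χ b : ℂ)
      = (Fintype.card B : ℂ) * (starRingEnd ℂ) (p a b) := by
    have hFconj : ∀ χ : B →* ℂˣ, F χ = ∑ c : B, (starRingEnd ℂ) (p a c) * (χ c⁻¹ : ℂ) := by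
      intro χ
      rw [← hreal χ, hF]
      rw [map_sum]
      refine Finset.sum_congr rfl fun c _ => ?_
      rw [map_mul, hconj]
    simp only [hFconj, Finset.sum_mul]
    rw [Finset.sum_comm]
    have key : ∀ c : B, ∑ χ : B →* ℂˣ, (starRingEnd ℂ) (p a c) * (χ c⁻¹ : ℂ) * (χ b : ℂ)
        = (starRingEnd ℂ) (p a c) * ∑ χ : B →* ℂˣ, (χ (c⁻¹ * b) : ℂ) := by
      intro c
      rw [Finset.mul_sum]
      refine Finset.sum_congr rfl fun χ _ => ?_
      rw [map_mul]; push_cast; ring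
    simp only [key, horth]
    rw [Finset.sum_eq_single b]
    · rw [if_pos (inv_mul_cancel b), mul_comm]
    · intro c _ hcne
      rw [if_neg (fun h => hcne (inv_mul_eq_one.mp h)), mul_zero]
    · intro h; exact absurd (Finset.mem_univ _) h
  have hcard : (Fintype.card B : ℂ) ≠ 0 := Nat.cast_ne_zero.mpr Fintype.card_ne_zero
  exact mul_left_cancel₀ hcard (hA ▸ hB)
end

section
/- Let A and B be finite abelian groups and p : A × B → ℂ satisfy the unitality, counitality, multiplicativity, comultiplicativity, and nondegeneracy conditions. Then p(a, b⁻¹) = p(a⁻¹, b) for all a ∈ A and b ∈ B. -/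
/-- Under the unitality, counitality, multiplicativity, comultiplicativity and
nondegeneracy conditions: `p(a, b⁻¹) = p(a⁻¹, b)` for all `a ∈ A`, `b ∈ B`. -/
theorem p_antipode {A B : Type*} [CommGroup A] [CommGroup B] [Fintype A] [Fintype B]
    [DecidableEq A] [DecidableEq B] (p : A → B → ℂ)
    (hUnit : ∀ b : B, ∑ a : A, p a b = if b = 1 then 1 else 0)
    (hCounit : ∀ a : A, ∑ b : B, p a b = if a = 1 then 1 else 0)
    (hMul : ∀ (x y : A) (b : B),
      ∑ t : B, p x (b * t⁻¹) * p y t = if x = y then p x b else 0)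
    (hComul : ∀ (x : A) (b c : B),
      ∑ t : A, p (x * t⁻¹) b * p t c = if b = c then p x b else 0)
    (hNdgA : ∀ a : A, ∃ b : B, p a b ≠ 0)
    (hNdgB : ∀ b : B, ∃ a : A, p a b ≠ 0) :
    ∀ (a : A) (b : B), p a b⁻¹ = p a⁻¹ b := by
  -- Step A : F * G = convolution unit, where G a b = p a⁻¹ b
  have stepA : ∀ (a : A) (b : B),
      (∑ x : A, ∑ t : B, p x (b * t⁻¹) * p (x⁻¹ * a)⁻¹ t)
        = if a = 1 ∧ b = 1 then 1 else 0 := by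
    intro a b
    have h1 : ∀ x : A, (∑ t : B, p x (b * t⁻¹) * p (x⁻¹ * a)⁻¹ t)
        = if x = (x⁻¹ * a)⁻¹ then p x b else 0 := fun x => hMul x _ b
    simp_rw [h1]
    have h2 : ∀ x : A, (x = (x⁻¹ * a)⁻¹) ↔ (a = 1) := by
      intro x
      rw [mul_inv_rev, inv_inv, eq_comm, mul_comm, mul_eq_left, inv_eq_one]
    simp_rw [h2]
    by_cases ha : a = 1
    · simp [ha, hUnit b]
    · simp [ha]
  -- Step B : H * F = convolution unit, where H a b = p a b⁻¹
  have stepB : ∀ (a : A) (b : B),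
      (∑ x : A, ∑ t : B, p x (b * t⁻¹)⁻¹ * p (x⁻¹ * a) t)
        = if a = 1 ∧ b = 1 then 1 else 0 := by
    intro a b
    rw [Finset.sum_comm]
    have h1 : ∀ t : B, (∑ x : A, p x (b * t⁻¹)⁻¹ * p (x⁻¹ * a) t)
        = if b = 1 then p a t else 0 := by
      intro t
      have h2 : (∑ x : A, p x (b * t⁻¹)⁻¹ * p (x⁻¹ * a) t)
          = ∑ s : A, p (a * s⁻¹) (t * b⁻¹) * p s t := by
        refine Fintype.sum_equiv ((Equiv.inv A).trans (Equiv.mulLeft a)) _ _ ?_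
        intro s
        have e1 : (a * s⁻¹)⁻¹ * a = s := by group
        have e2 : (b * t⁻¹)⁻¹ = t * b⁻¹ := by group
        simp [Equiv.mulLeft, e1, e2, mul_assoc, mul_comm, mul_left_comm]
      rw [h2, hComul a (t * b⁻¹) t]
      have h3 : (t * b⁻¹ = t) ↔ (b = 1) := by
        rw [mul_comm, mul_eq_right, inv_eq_one]
      by_cases hb : b = 1
      · simp [hb, h3, hb ▸ (by group : t * (1:B)⁻¹ = t)]
      · simp [h3, hb]
    simp_rw [h1]
    by_cases hb : b = 1
    · simp [hb, hCounit a]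
    · simp [hb]
  intro a b
  -- The big sum T = H * (F * G) = (H * F) * G
  have key : (∑ x : A, ∑ t : B, ∑ y : A, ∑ s : B,
      p x (b * t⁻¹)⁻¹ * (p y (t * s⁻¹) * p (y⁻¹ * (x⁻¹ * a))⁻¹ s)) = p a b⁻¹ := by
    have h1 : ∀ (x : A) (t : B), (∑ y : A, ∑ s : B,
        p x (b * t⁻¹)⁻¹ * (p y (t * s⁻¹) * p (y⁻¹ * (x⁻¹ * a))⁻¹ s))
        = p x (b * t⁻¹)⁻¹ * (if x⁻¹ * a = 1 ∧ t = 1 then 1 else 0) := by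
      intro x t
      simp_rw [← Finset.mul_sum]
      rw [stepA]
    simp_rw [h1]
    rw [Finset.sum_comm]
    have h2 : ∀ t : B, (∑ x : A, p x (b * t⁻¹)⁻¹ * (if x⁻¹ * a = 1 ∧ t = 1 then 1 else 0))
        = if t = 1 then p a (b * t⁻¹)⁻¹ else 0 := by
      intro t
      by_cases ht : t = 1
      · subst ht
        rw [Finset.sum_eq_single a]
        · simp
        · intro x _ hx
          simp [inv_mul_eq_one, hx]
        · intro h; exact absurd (Finset.mem_univ a) h
      · simp [ht]
    simp_rw [h2]
    simp
  -- Recompute the big sum via reindexing to get p a⁻¹ b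
  have key2 : (∑ x : A, ∑ t : B, ∑ y : A, ∑ s : B,
      p x (b * t⁻¹)⁻¹ * (p y (t * s⁻¹) * p (y⁻¹ * (x⁻¹ * a))⁻¹ s)) = p a⁻¹ b := by
    -- reindex y := x⁻¹ * z
    have hy : ∀ (x : A) (t : B), (∑ y : A, ∑ s : B,
        p x (b * t⁻¹)⁻¹ * (p y (t * s⁻¹) * p (y⁻¹ * (x⁻¹ * a))⁻¹ s))
        = ∑ z : A, ∑ s : B,
        p x (b * t⁻¹)⁻¹ * (p (x⁻¹ * z) (t * s⁻¹) * p (z⁻¹ * a)⁻¹ s) := by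
      intro x t
      refine Fintype.sum_equiv (Equiv.mulLeft x) _ _ ?_
      intro y
      have e1 : x⁻¹ * (x * y) = y := by group
      have e2 : (x * y)⁻¹ * a = y⁻¹ * (x⁻¹ * a) := by group
      simp [Equiv.mulLeft, e1, e2, mul_assoc, mul_comm, mul_left_comm]
    simp_rw [hy]
    -- move the t-sum innermost: order x, z, s, t
    have hswap : (∑ x : A, ∑ t : B, ∑ z : A, ∑ s : B,
        p x (b * t⁻¹)⁻¹ * (p (x⁻¹ * z) (t * s⁻¹) * p (z⁻¹ * a)⁻¹ s))
        = ∑ x : A, ∑ z : A, ∑ s : B, ∑ t : B,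
        p x (b * t⁻¹)⁻¹ * (p (x⁻¹ * z) (t * s⁻¹) * p (z⁻¹ * a)⁻¹ s) := by
      congr 1; funext x
      rw [Finset.sum_comm]
      congr 1; funext z
      rw [Finset.sum_comm]
    rw [hswap]
    -- reindex t := u * s
    have ht : ∀ (x z : A) (s : B), (∑ t : B,
        p x (b * t⁻¹)⁻¹ * (p (x⁻¹ * z) (t * s⁻¹) * p (z⁻¹ * a)⁻¹ s))
        = ∑ u : B, p x ((b * s⁻¹) * u⁻¹)⁻¹ * p (x⁻¹ * z) u * p (z⁻¹ * a)⁻¹ s := by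
      intro x z s
      refine Fintype.sum_equiv (Equiv.mulRight s⁻¹) _ _ ?_
      intro t
      have e1 : b * t⁻¹ = (b * s⁻¹) * (t * s⁻¹)⁻¹ := by group
      simp only [Equiv.coe_mulRight, ← e1]
      ring
    simp_rw [ht]
    -- pull out the last factor and apply stepB
    have hfin : ∀ (x z : A) (s : B), (∑ u : B,
        p x ((b * s⁻¹) * u⁻¹)⁻¹ * p (x⁻¹ * z) u * p (z⁻¹ * a)⁻¹ s)
        = (∑ u : B, p x ((b * s⁻¹) * u⁻¹)⁻¹ * p (x⁻¹ * z) u) * p (z⁻¹ * a)⁻¹ s := by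
      intro x z s
      rw [Finset.sum_mul]
    simp_rw [hfin]
    rw [Finset.sum_comm]
    have h2 : ∀ z : A, (∑ s : B, ∑ x : A,
        (∑ u : B, p x ((b * s⁻¹) * u⁻¹)⁻¹ * p (x⁻¹ * z) u) * p (z⁻¹ * a)⁻¹ s)
        = ∑ s : B, (if z = 1 ∧ b * s⁻¹ = 1 then 1 else 0) * p (z⁻¹ * a)⁻¹ s := by
      intro z
      congr 1; funext s
      rw [← Finset.sum_mul, stepB]
    -- careful with the sum order here
    have h3 : (∑ z : A, ∑ x : A, ∑ s : B,
        (∑ u : B, p x ((b * s⁻¹) * u⁻¹)⁻¹ * p (x⁻¹ * z) u) * p (z⁻¹ * a)⁻¹ s)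
        = ∑ z : A, ∑ s : B, (if z = 1 ∧ b * s⁻¹ = 1 then 1 else 0) * p (z⁻¹ * a)⁻¹ s := by
      refine Finset.sum_congr rfl fun z _ => ?_
      rw [Finset.sum_comm]
      exact h2 z
    rw [h3]
    rw [Finset.sum_eq_single 1]
    · rw [Finset.sum_eq_single b]
      · simp
      · intro s _ hs
        have : ¬ (b * s⁻¹ = 1) := fun h => hs (by rwa [mul_inv_eq_one, eq_comm] at h)
        simp [this]
      · intro h; exact absurd (Finset.mem_univ b) h
    · intro z _ hz; simp [hz]
    · intro h; exact absurd (Finset.mem_univ 1) h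
  rw [← key, key2]
end

section
/- Let A and B be finite abelian groups and p : A × B → ℂ satisfy the unitality, counitality, multiplicativity, comultiplicativity, and nondegeneracy conditions. Then the map σ : A × B → ℂ defined by σ(a,b) = |A|·p(a,b) takes nonzero values and is a bicharacter: σ(aa′,b) = σ(a,b)·σ(a′,b) and σ(a,bb′) = σ(a,b)·σ(a,b′) for all a, a′ ∈ A and b, b′ ∈ B. -/
open Finset

/-- Orthogonal "idempotent-like" families are linearly independent. -/
lemma aux_indep {G H : Type*} [CommGroup G] [Fintype G] [Fintype H] [DecidableEq H]
    (f : H → G → ℂ)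
    (orth : ∀ (b c : H) (x : G), ∑ t : G, f b (x * t⁻¹) * f c t = if b = c then f b x else 0)
    (nz : ∀ b, ∃ x, f b x ≠ 0) : LinearIndependent ℂ f := by
  rw [Fintype.linearIndependent_iff]
  intro g hg c
  obtain ⟨x, hx⟩ := nz c
  have h0 : ∀ y : G, ∑ b : H, g b * f b y = 0 := by
    intro y
    have := congrFun hg y
    simpa [Finset.sum_apply] using this
  have key : g c * f c x = 0 := by
    have : (0 : ℂ) = ∑ t : G, (∑ b : H, g b * f b (x * t⁻¹)) * f c t := by
      simp [h0]
    rw [this]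
    simp_rw [Finset.sum_mul, Finset.sum_comm (s := (univ : Finset G)), mul_assoc,
      ← Finset.mul_sum, orth]
    simp
  rcases mul_eq_zero.mp key with h | h
  · exact h
  · exact absurd h hx

lemma aux_key {G H : Type*} [CommGroup G] [CommGroup H] [Fintype G] [Fintype H]
    [DecidableEq H] (f : H → G → ℂ)
    (orth : ∀ (b c : H) (x : G), ∑ t : G, f b (x * t⁻¹) * f c t = if b = c then f b x else 0)
    (nz : ∀ b, ∃ x, f b x ≠ 0)
    (hcard : Fintype.card H = Fintype.card G) :
    ∀ (x : G) (b : H), ∃ r : ℂ, ∀ a, f b (x * a) = r * f b a := by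
  have hli := aux_indep f orth nz
  have : Nonempty H := Fintype.card_pos_iff.mp (hcard ▸ Fintype.card_pos)
  have hfr : Fintype.card H = Module.finrank ℂ (G → ℂ) := by
    rw [hcard, Module.finrank_pi]
  intro x b
  set bas := basisOfLinearIndependentOfCardEqFinrank hli hfr with hbas
  have hbasc : ⇑bas = f := coe_basisOfLinearIndependentOfCardEqFinrank hli hfr
  set h : G → ℂ := fun a => f b (x * a) with hh
  have hrepr : ∀ z : G, h z = ∑ c : H, bas.repr h c * f c z := by
    intro z
    conv_lhs => rw [← Module.Basis.sum_repr bas h]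
    simp [Finset.sum_apply, hbasc]
  refine ⟨bas.repr h b, fun a => ?_⟩
  have e1 : ∑ t : G, h (a * t⁻¹) * f b t = h a := by
    have horth := orth b b (x * a)
    rw [if_pos rfl] at horth
    calc ∑ t : G, h (a * t⁻¹) * f b t = ∑ t : G, f b (x * a * t⁻¹) * f b t := by
          refine Finset.sum_congr rfl fun t _ => ?_
          rw [hh]; simp [mul_assoc]
      _ = f b (x * a) := horth
      _ = h a := rfl
  have e2 : ∑ t : G, h (a * t⁻¹) * f b t = bas.repr h b * f b a := by
    simp_rw [hrepr, Finset.sum_mul, Finset.sum_comm (s := (univ : Finset G)), mul_assoc,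
      ← Finset.mul_sum, orth]
    simp
  rw [hh] at e1
  exact e1.symm.trans e2

/-- A multiplicative function with nonzero sum over a finite group is trivial. -/
lemma aux_triv {G : Type*} [CommGroup G] [Fintype G] (l : G → ℂ)
    (hm : ∀ x y, l (x * y) = l x * l y) (hs : ∑ g : G, l g ≠ 0) : ∀ g, l g = 1 := by
  intro g
  have h1 : ∑ a : G, l (g * a) = ∑ a : G, l a :=
    Fintype.sum_bijective (g * ·) (Group.mulLeft_bijective g) _ _ (fun a => rfl)
  have h2 : l g * ∑ a : G, l a = ∑ a : G, l a := by
    rw [Finset.mul_sum]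
    simp_rw [← hm]
    exact h1
  have h3 : (l g - 1) * ∑ a : G, l a = 0 := by
    rw [sub_mul, one_mul, h2, sub_self]
  rcases mul_eq_zero.mp h3 with h | h
  · linear_combination h
  · exact absurd h hs

/-- Under the unitality, counitality, multiplicativity, comultiplicativity and
nondegeneracy conditions, the map `σ(a,b) = |A|·p(a,b)` takes nonzero values and is a
bicharacter of `A × B`. -/
theorem p_bicharacter {A B : Type*} [CommGroup A] [CommGroup B] [Fintype A] [Fintype B]
    [DecidableEq A] [DecidableEq B] (p : A → B → ℂ)
    (hUnit : ∀ b : B, ∑ a : A, p a b = if b = 1 then 1 else 0)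
    (hCounit : ∀ a : A, ∑ b : B, p a b = if a = 1 then 1 else 0)
    (hMul : ∀ (x y : A) (b : B),
      ∑ t : B, p x (b * t⁻¹) * p y t = if x = y then p x b else 0)
    (hComul : ∀ (x : A) (b c : B),
      ∑ t : A, p (x * t⁻¹) b * p t c = if b = c then p x b else 0)
    (hNdgA : ∀ a : A, ∃ b : B, p a b ≠ 0)
    (hNdgB : ∀ b : B, ∃ a : A, p a b ≠ 0) :
    (∀ (a : A) (b : B), (Fintype.card A : ℂ) * p a b ≠ 0) ∧
    (∀ (a a' : A) (b : B),
      (Fintype.card A : ℂ) * p (a * a') b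
        = ((Fintype.card A : ℂ) * p a b) * ((Fintype.card A : ℂ) * p a' b)) ∧
    (∀ (a : A) (b b' : B),
      (Fintype.card A : ℂ) * p a (b * b')
        = ((Fintype.card A : ℂ) * p a b) * ((Fintype.card A : ℂ) * p a b')) := by
  -- the two families
  set f : B → A → ℂ := fun b a => p a b with hf
  have orthf : ∀ (b c : B) (x : A), ∑ t : A, f b (x * t⁻¹) * f c t
      = if b = c then f b x else 0 := fun b c x => hComul x b c
  have nzf : ∀ b, ∃ x, f b x ≠ 0 := hNdgB
  set f' : A → B → ℂ := fun a b => p a b with hf'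
  have orthf' : ∀ (b c : A) (x : B), ∑ t : B, f' b (x * t⁻¹) * f' c t
      = if b = c then f' b x else 0 := fun b c x => hMul b c x
  have nzf' : ∀ a, ∃ b, f' a b ≠ 0 := hNdgA
  -- cardinality equality
  have c1 : Fintype.card B ≤ Fintype.card A := by
    have := (aux_indep f orthf nzf).fintype_card_le_finrank
    rwa [Module.finrank_pi] at this
  have c2 : Fintype.card A ≤ Fintype.card B := by
    have := (aux_indep f' orthf' nzf').fintype_card_le_finrank
    rwa [Module.finrank_pi] at this
  have hcard : Fintype.card B = Fintype.card A := le_antisymm c1 c2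
  -- the two "character" families
  choose lam hlam using aux_key f orthf nzf hcard
  choose mu hmu using aux_key f' orthf' nzf' hcard.symm
  -- hlam : ∀ (x : A) (b : B) (a : A), p (x * a) b = lam x b * p a b
  have hlam' : ∀ (x : A) (b : B) (a : A), p (x * a) b = lam x b * p a b := hlam
  have hmu' : ∀ (x : B) (a : A) (b : B), p a (x * b) = mu x a * p a b := hmu
  have hpx : ∀ x b, p x b = lam x b * p 1 b := by
    intro x b; have := hlam' x b 1; rwa [mul_one] at this
  have hpy : ∀ a c, p a c = mu c a * p a 1 := by
    intro a c; have := hmu' c a 1; rwa [mul_one] at this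
  have hp1b : ∀ b, p 1 b ≠ 0 := by
    intro b h
    obtain ⟨a, ha⟩ := hNdgB b
    exact ha (by rw [hpx a b, h, mul_zero])
  have hpa1 : ∀ a, p a 1 ≠ 0 := by
    intro a h
    obtain ⟨b, hb⟩ := hNdgA a
    exact hb (by rw [hpy a b, h, mul_zero])
  have lammul : ∀ x y b, lam (x * y) b = lam x b * lam y b := by
    intro x y b
    have e1 : p (x * y) b = lam (x * y) b * p 1 b := hpx _ _
    have e2 : p (x * y) b = lam x b * (lam y b * p 1 b) := by
      rw [hlam' x b y, ← hpx]
    have h := e1.symm.trans e2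
    rw [← mul_assoc] at h
    exact mul_right_cancel₀ (hp1b b) h
  have mumul : ∀ b b' a, mu (b * b') a = mu b a * mu b' a := by
    intro b b' a
    have e1 : p a (b * b') = mu (b * b') a * p a 1 := hpy _ _
    have e2 : p a (b * b') = mu b a * (mu b' a * p a 1) := by
      rw [hmu' b a b', ← hpy]
    have h := e1.symm.trans e2
    rw [← mul_assoc] at h
    exact mul_right_cancel₀ (hpa1 a) h
  -- triviality of lam · 1 and mu · 1
  have sumA : (∑ a : A, lam a 1) * p 1 1 = 1 := by
    have := hUnit 1
    rw [if_pos rfl] at this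
    rw [Finset.sum_mul]
    rw [← this]
    exact Finset.sum_congr rfl fun a _ => (hpx a 1).symm
  have trivA : ∀ a, lam a 1 = 1 := by
    refine aux_triv _ (fun x y => lammul x y 1) ?_
    intro h
    rw [h, zero_mul] at sumA
    exact zero_ne_one sumA
  have sumB : (∑ b : B, mu b 1) * p 1 1 = 1 := by
    have := hCounit 1
    rw [if_pos rfl] at this
    rw [Finset.sum_mul]
    rw [← this]
    exact Finset.sum_congr rfl fun b _ => (hpy 1 b).symm
  have trivB : ∀ b, mu b 1 = 1 := by
    refine aux_triv _ (fun x y => mumul x y 1) ?_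
    intro h
    rw [h, zero_mul] at sumB
    exact zero_ne_one sumB
  -- p a 1 = p 1 1 and p 1 b = p 1 1, card A * p 1 1 = 1
  have hpa1c : ∀ a, p a 1 = p 1 1 := by
    intro a; rw [hpx a 1, trivA a, one_mul]
  have hp1bc : ∀ b, p 1 b = p 1 1 := by
    intro b; rw [hpy 1 b, trivB b, one_mul]
  have hN : (Fintype.card A : ℂ) * p 1 1 = 1 := by
    have := hUnit 1
    rw [if_pos rfl] at this
    calc (Fintype.card A : ℂ) * p 1 1 = ∑ _a : A, p 1 1 := by
          rw [Finset.sum_const, Finset.card_univ, nsmul_eq_mul]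
      _ = ∑ a : A, p a 1 := Finset.sum_congr rfl fun a _ => (hpa1c a).symm
      _ = 1 := this
  -- identification of σ
  have lamEq : ∀ a b, (Fintype.card A : ℂ) * p a b = lam a b := by
    intro a b
    rw [hpx a b, hp1bc b]
    calc (Fintype.card A : ℂ) * (lam a b * p 1 1)
        = lam a b * ((Fintype.card A : ℂ) * p 1 1) := by ring
      _ = lam a b := by rw [hN, mul_one]
  have muEq : ∀ a b, (Fintype.card A : ℂ) * p a b = mu b a := by
    intro a b
    rw [hpy a b, hpa1c a]
    calc (Fintype.card A : ℂ) * (mu b a * p 1 1)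
        = mu b a * ((Fintype.card A : ℂ) * p 1 1) := by ring
      _ = mu b a := by rw [hN, mul_one]
  have lamne : ∀ a b, lam a b ≠ 0 := by
    intro a b
    have h1 : lam 1 b = 1 := by
      have h := (hpx 1 b).symm.trans (one_mul (p 1 b)).symm
      exact mul_right_cancel₀ (hp1b b) h
    have : lam a b * lam a⁻¹ b = 1 := by rw [← lammul, mul_inv_cancel, h1]
    exact left_ne_zero_of_mul_eq_one this
  refine ⟨?_, ?_, ?_⟩
  · intro a b; rw [lamEq]; exact lamne a b
  · intro a a' b; rw [lamEq, lamEq, lamEq, lammul]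
  · intro a b b'; rw [muEq, muEq, muEq, mumul]
end

section
/- Let A and B be finite abelian groups with |A| = |B|, let σ : A × B → ℂ be a bicharacter, and define p : A × B → ℂ by p(a,b) = σ(a,b)/|A|. Then p satisfies the unitality, counitality, multiplicativity, and comultiplicativity conditions if and only if σ is orthogonal. -/
/-- Let `A, B` be finite abelian groups with `|A| = |B|`, let `σ : A × B → ℂ` be a
bicharacter, and define `p(a,b) = σ(a,b)/|A|`.  Then `p` satisfies the unitality,
counitality, multiplicativity and comultiplicativity conditions if and only if `σ` is
orthogonal. -/
theorem p_hopf_iff_orthogonal {A B : Type*} [CommGroup A] [CommGroup B]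
    [Fintype A] [Fintype B] [DecidableEq A] [DecidableEq B]
    (hcard : Fintype.card A = Fintype.card B)
    (σ : A → B → ℂ)
    (hσ0 : ∀ (a : A) (b : B), σ a b ≠ 0)
    (hσ1 : ∀ (a a' : A) (b : B), σ (a * a') b = σ a b * σ a' b)
    (hσ2 : ∀ (a : A) (b b' : B), σ a (b * b') = σ a b * σ a b')
    (p : A → B → ℂ)
    (hp : ∀ (a : A) (b : B), p a b = σ a b / (Fintype.card A : ℂ)) :
    ((∀ b : B, ∑ a : A, p a b = if b = 1 then 1 else 0) ∧
     (∀ a : A, ∑ b : B, p a b = if a = 1 then 1 else 0) ∧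
     (∀ (x y : A) (b : B),
       ∑ t : B, p x (b * t⁻¹) * p y t = if x = y then p x b else 0) ∧
     (∀ (x : A) (b c : B),
       ∑ t : A, p (x * t⁻¹) b * p t c = if b = c then p x b else 0)) ↔
    ((∀ x y : A,
       (1 / (Fintype.card B : ℂ)) * ∑ b : B, σ x b * (starRingEnd ℂ) (σ y b)
         = if x = y then 1 else 0) ∧
     (∀ k l : B,
       (1 / (Fintype.card A : ℂ)) * ∑ a : A, σ a k * (starRingEnd ℂ) (σ a l)
         = if k = l then 1 else 0)) := by
  set N : ℂ := (Fintype.card A : ℂ) with hNdef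
  have hN : N ≠ 0 := Nat.cast_ne_zero.mpr Fintype.card_ne_zero
  have hNB : (Fintype.card B : ℂ) = N := by rw [hNdef, hcard]
  -- basic bicharacter lemmas
  have h1b : ∀ b : B, σ 1 b = 1 := by
    intro b
    have h := hσ1 1 1 b
    rw [one_mul] at h
    exact (mul_left_cancel₀ (hσ0 1 b) (by rw [mul_one]; exact h)).symm
  have ha1 : ∀ a : A, σ a 1 = 1 := by
    intro a
    have h := hσ2 a 1 1
    rw [one_mul] at h
    exact (mul_left_cancel₀ (hσ0 a 1) (by rw [mul_one]; exact h)).symm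
  have hinvA : ∀ (a : A) (b : B), σ a⁻¹ b = (σ a b)⁻¹ := by
    intro a b
    refine eq_inv_of_mul_eq_one_left ?_
    rw [← hσ1, inv_mul_cancel, h1b]
  have hinvB : ∀ (a : A) (b : B), σ a b⁻¹ = (σ a b)⁻¹ := by
    intro a b
    refine eq_inv_of_mul_eq_one_left ?_
    rw [← hσ2, inv_mul_cancel, ha1]
  have hpow : ∀ (a : A) (b : B) (n : ℕ), σ (a ^ n) b = σ a b ^ n := by
    intro a b n
    induction n with
    | zero => simp [h1b]
    | succ n ih => rw [pow_succ, pow_succ, hσ1, ih]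
  have hconj : ∀ (a : A) (b : B), (starRingEnd ℂ) (σ a b) = (σ a b)⁻¹ := by
    intro a b
    have hpow1 : σ a b ^ Fintype.card A = 1 := by
      rw [← hpow, pow_card_eq_one, h1b]
    have habs : ‖σ a b‖ = 1 :=
      Complex.norm_eq_one_of_pow_eq_one hpow1 Fintype.card_ne_zero
    exact (Complex.inv_eq_conj habs).symm
  constructor
  · rintro ⟨h1, h2, _h3, _h4⟩
    have S1 : ∀ b : B, ∑ a : A, σ a b = if b = 1 then N else 0 := by
      intro b
      have h' : (∑ a : A, σ a b) / N = if b = 1 then 1 else 0 := by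
        rw [Finset.sum_div]; simpa [hp] using h1 b
      rw [div_eq_iff hN] at h'
      rw [h']; split_ifs <;> ring
    have S2 : ∀ a : A, ∑ b : B, σ a b = if a = 1 then N else 0 := by
      intro a
      have h' : (∑ b : B, σ a b) / N = if a = 1 then 1 else 0 := by
        rw [Finset.sum_div]; simpa [hp] using h2 a
      rw [div_eq_iff hN] at h'
      rw [h']; split_ifs <;> ring
    refine ⟨fun x y => ?_, fun k l => ?_⟩
    · have key : ∀ b : B, σ x b * (starRingEnd ℂ) (σ y b) = σ (x * y⁻¹) b := by
        intro b
        rw [hconj, ← hinvA, ← hσ1]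
      simp only [key]
      rw [S2 (x * y⁻¹), hNB]
      simp only [mul_inv_eq_one]
      split_ifs with h
      · exact one_div_mul_cancel hN
      · ring
    · have key : ∀ a : A, σ a k * (starRingEnd ℂ) (σ a l) = σ a (k * l⁻¹) := by
        intro a
        rw [hconj, ← hinvB, ← hσ2]
      simp only [key]
      rw [S1 (k * l⁻¹)]
      simp only [mul_inv_eq_one]
      split_ifs with h
      · exact one_div_mul_cancel hN
      · ring
  · rintro ⟨hO1, hO2⟩
    have S2 : ∀ a : A, ∑ b : B, σ a b = if a = 1 then N else 0 := by
      intro a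
      have h := hO1 a 1
      simp only [h1b, map_one, mul_one, hNB] at h
      rw [div_mul_eq_mul_div, one_mul, div_eq_iff hN] at h
      rw [h]; split_ifs <;> ring
    have S1 : ∀ b : B, ∑ a : A, σ a b = if b = 1 then N else 0 := by
      intro b
      have h := hO2 b 1
      simp only [ha1, map_one, mul_one] at h
      rw [div_mul_eq_mul_div, one_mul, div_eq_iff hN] at h
      rw [h]; split_ifs <;> ring
    refine ⟨fun b => ?_, fun a => ?_, fun x y b => ?_, fun x b c => ?_⟩
    · simp only [hp]
      rw [← Finset.sum_div, S1 b]
      split_ifs with h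
      · exact div_self hN
      · simp
    · simp only [hp]
      rw [← Finset.sum_div, S2 a]
      split_ifs with h
      · exact div_self hN
      · simp
    · have key : ∀ t : B, p x (b * t⁻¹) * p y t = σ x b * σ (x⁻¹ * y) t / (N * N) := by
        intro t
        simp only [hp]
        have e1 : σ x (b * t⁻¹) = σ x b * (σ x t)⁻¹ := by rw [hσ2, hinvB]
        have e2 : σ (x⁻¹ * y) t = (σ x t)⁻¹ * σ y t := by rw [hσ1, hinvA]
        rw [e1, e2]
        field_simp
      simp only [key]
      rw [← Finset.sum_div, ← Finset.mul_sum, S2 (x⁻¹ * y)]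
      simp only [inv_mul_eq_one]
      split_ifs with h
      · rw [hp]
        field_simp
      · simp
    · have key : ∀ t : A, p (x * t⁻¹) b * p t c = σ x b * σ t (b⁻¹ * c) / (N * N) := by
        intro t
        simp only [hp]
        have e1 : σ (x * t⁻¹) b = σ x b * (σ t b)⁻¹ := by rw [hσ1, hinvA]
        have e2 : σ t (b⁻¹ * c) = (σ t b)⁻¹ * σ t c := by rw [hσ2, hinvB]
        rw [e1, e2]
        field_simp
      simp only [key]
      rw [← Finset.sum_div, ← Finset.mul_sum, S1 (b⁻¹ * c)]
      simp only [inv_mul_eq_one]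
      split_ifs with h
      · rw [hp]
        field_simp
      · simp
end

section
/- Let A and B be finite abelian groups and p : A × B → ℂ satisfy the unitality, counitality, multiplicativity, comultiplicativity, and nondegeneracy conditions. Then the assignment sending b ∈ B to the function a ↦ |A|·p(a,b) is a group isomorphism from B onto the character group Hom(A, ℂˣ) of A. -/
open Finset

open scoped Classical in
private lemma sum_char {G : Type*} [CommGroup G] [Fintype G] (χ : G →* ℂˣ) :
    ∑ a : G, ((χ a : ℂˣ) : ℂ) = if χ = 1 then (Fintype.card G : ℂ) else 0 := by
  by_cases h : χ = 1
  · subst h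
    simp only [MonoidHom.one_apply, Units.val_one, Finset.sum_const, card_univ, nsmul_eq_mul,
      mul_one, if_true, eq_self_iff_true]
  · rw [if_neg h]
    obtain ⟨a₀, ha₀⟩ : ∃ a, χ a ≠ 1 := by
      by_contra hc; push_neg at hc; exact h (MonoidHom.ext fun a => hc a)
    have key : (↑(χ a₀) : ℂ) * ∑ a : G, ((χ a : ℂˣ) : ℂ) = ∑ a : G, ((χ a : ℂˣ) : ℂ) := by
      rw [Finset.mul_sum]
      exact Fintype.sum_equiv (Equiv.mulLeft a₀) _ _ (fun a => by
        simp [map_mul, Units.val_mul])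
    have h1 : ((↑(χ a₀) : ℂ) - 1) * ∑ a : G, ((χ a : ℂˣ) : ℂ) = 0 := by
      rw [sub_mul, key, one_mul, sub_self]
    rcases mul_eq_zero.mp h1 with h2 | h2
    · rw [sub_eq_zero] at h2
      exact absurd (Units.val_eq_one.mp h2) ha₀
    · exact h2

open scoped Classical in
private lemma sum_char_apply {G : Type*} [CommGroup G] [Fintype G] [Fintype (G →* ℂˣ)] (g : G) :
    ∑ χ : G →* ℂˣ, ((χ g : ℂˣ) : ℂ) = if g = 1 then (Fintype.card (G →* ℂˣ) : ℂ) else 0 := by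
  by_cases hg : g = 1
  · subst hg
    simp only [map_one, Units.val_one, Finset.sum_const, card_univ, nsmul_eq_mul, mul_one,
      if_true, eq_self_iff_true]
  · rw [if_neg hg]
    obtain ⟨φ, hφ⟩ := CommGroup.exists_apply_ne_one_of_hasEnoughRootsOfUnity G ℂ hg
    have hev : (⟨⟨fun χ : G →* ℂˣ => χ g, rfl⟩, fun _ _ => rfl⟩ : (G →* ℂˣ) →* ℂˣ) ≠ 1 := by
      intro hE
      exact hφ (by simpa using DFunLike.congr_fun hE φ)
    have := sum_char (⟨⟨fun χ : G →* ℂˣ => χ g, rfl⟩, fun _ _ => rfl⟩ : (G →* ℂˣ) →* ℂˣ)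
    rw [if_neg hev] at this
    exact this

private lemma card_char {G : Type*} [CommGroup G] [Fintype G] [Fintype (G →* ℂˣ)] :
    Fintype.card (G →* ℂˣ) = Fintype.card G :=
  Fintype.card_congr (CommGroup.monoidHom_mulEquiv_of_hasEnoughRootsOfUnity G ℂ).some.toEquiv

private noncomputable def Fchar {A B : Type*} [CommGroup A] [Fintype A] (p : A → B → ℂ)
    (b : B) (χ : A →* ℂˣ) : ℂ :=
  ∑ a : A, p a b * ((χ a⁻¹ : ℂˣ) : ℂ)

open scoped Classical in
private lemma key_surj {A B : Type*} [CommGroup A] [CommGroup B] [Fintype A] [Fintype B]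
    [DecidableEq A] [DecidableEq B] [Fintype (A →* ℂˣ)] (p : A → B → ℂ)
    (hCounit : ∀ a : A, ∑ b : B, p a b = if a = 1 then 1 else 0)
    (hComul : ∀ (x : A) (b c : B),
      ∑ t : A, p (x * t⁻¹) b * p t c = if b = c then p x b else 0)
    (hNdgB : ∀ b : B, ∃ a : A, p a b ≠ 0) :
    ∃ β : (A →* ℂˣ) → B, Function.Surjective β ∧
      ∀ (b : B) (a : A),
        ∑ χ : A →* ℂˣ, (if b = β χ then 1 else 0) * ((χ a : ℂˣ) : ℂ)
          = (Fintype.card (A →* ℂˣ) : ℂ) * p a b := by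
  have stepA : ∀ (χ : A →* ℂˣ) (b c : B),
      Fchar p b χ * Fchar p c χ = if b = c then Fchar p b χ else 0 := by
    intro χ b c
    have h2 : ∀ y : A, ∑ x : A, (p x b * ((χ x⁻¹ : ℂˣ) : ℂ)) * (p y c * ((χ y⁻¹ : ℂˣ) : ℂ))
        = ∑ z : A, (p (z * y⁻¹) b * p y c) * ((χ z⁻¹ : ℂˣ) : ℂ) := by
      intro y
      refine Fintype.sum_equiv (Equiv.mulRight y) _ _ fun x => ?_
      simp only [Equiv.coe_mulRight, mul_inv_cancel_right, mul_inv_rev, map_mul, Units.val_mul]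
      ring
    have h3 : Fchar p b χ * Fchar p c χ
        = ∑ z : A, (∑ y : A, p (z * y⁻¹) b * p y c) * ((χ z⁻¹ : ℂˣ) : ℂ) := by
      rw [Fchar, Fchar, Finset.sum_mul_sum, Finset.sum_comm]
      simp_rw [h2]
      rw [Finset.sum_comm]
      simp_rw [← Finset.sum_mul]
    rw [h3]
    simp_rw [hComul]
    by_cases hbc : b = c
    · subst hbc; simp [Fchar]
    · simp [hbc]
  have stepB : ∀ χ : A →* ℂˣ, ∑ b : B, Fchar p b χ = 1 := by
    intro χ
    simp_rw [Fchar]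
    rw [Finset.sum_comm]
    simp_rw [← Finset.sum_mul, hCounit, ite_mul, one_mul, zero_mul]
    simp
  have step01 : ∀ (χ : A →* ℂˣ) (b : B), Fchar p b χ = 0 ∨ Fchar p b χ = 1 := by
    intro χ b
    have h := stepA χ b b
    rw [if_pos rfl] at h
    have h0 : Fchar p b χ * (Fchar p b χ - 1) = 0 := by rw [mul_sub, h]; ring
    rcases mul_eq_zero.mp h0 with h1 | h1
    · exact Or.inl h1
    · exact Or.inr (sub_eq_zero.mp h1)
  have exist1 : ∀ χ : A →* ℂˣ, ∃ b : B, Fchar p b χ = 1 := by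
    intro χ
    by_contra hc
    push_neg at hc
    have hz : ∑ b : B, Fchar p b χ = 0 :=
      Finset.sum_eq_zero fun b _ => (step01 χ b).resolve_right (hc b)
    rw [stepB χ] at hz
    exact one_ne_zero hz
  choose β hβ using exist1
  have hchar : ∀ (b : B) (χ : A →* ℂˣ), Fchar p b χ = if b = β χ then 1 else 0 := by
    intro b χ
    by_cases hb : b = β χ
    · rw [if_pos hb, hb]; exact hβ χ
    · rw [if_neg hb]
      have h := stepA χ b (β χ)
      rw [if_neg hb, hβ χ, mul_one] at h
      exact h
  have hval : ∀ (b : B) (a : A),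
      ∑ χ : A →* ℂˣ, (if b = β χ then 1 else 0) * ((χ a : ℂˣ) : ℂ)
        = (Fintype.card (A →* ℂˣ) : ℂ) * p a b := by
    intro b a
    have hrw : ∑ χ : A →* ℂˣ, (if b = β χ then 1 else 0) * ((χ a : ℂˣ) : ℂ)
        = ∑ χ : A →* ℂˣ, Fchar p b χ * ((χ a : ℂˣ) : ℂ) := by
      refine Finset.sum_congr rfl fun χ _ => ?_
      rw [hchar b χ]
    rw [hrw]
    simp_rw [Fchar, Finset.sum_mul]
    rw [Finset.sum_comm]
    have hinner : ∀ x : A, ∑ χ : A →* ℂˣ, p x b * ((χ x⁻¹ : ℂˣ) : ℂ) * ((χ a : ℂˣ) : ℂ)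
        = p x b * ∑ χ : A →* ℂˣ, ((χ (x⁻¹ * a) : ℂˣ) : ℂ) := by
      intro x
      rw [Finset.mul_sum]
      refine Finset.sum_congr rfl fun χ _ => ?_
      rw [map_mul, Units.val_mul]; ring
    simp_rw [hinner, sum_char_apply, inv_mul_eq_one]
    simp_rw [mul_ite, mul_zero]
    rw [Finset.sum_ite_eq' Finset.univ a (fun x => p x b * (Fintype.card (A →* ℂˣ) : ℂ))]
    rw [if_pos (Finset.mem_univ a)]
    ring
  refine ⟨β, ?_, hval⟩
  intro b
  by_contra hc
  push_neg at hc
  obtain ⟨a, ha⟩ := hNdgB b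
  have h0 : ∑ χ : A →* ℂˣ, (if b = β χ then 1 else 0) * ((χ a : ℂˣ) : ℂ) = 0 :=
    Finset.sum_eq_zero fun χ _ => by rw [if_neg (fun h => hc χ h.symm), zero_mul]
  rw [hval b a] at h0
  rcases mul_eq_zero.mp h0 with h1 | h1
  · exact (Nat.cast_ne_zero.mpr (Fintype.card_ne_zero (α := A →* ℂˣ))) h1
  · exact ha h1

/-- Under the unitality, counitality, multiplicativity, comultiplicativity and
nondegeneracy conditions, the assignment sending `b ∈ B` to the character
`a ↦ |A|·p(a,b)` is a group isomorphism from `B` onto the character group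
`Hom(A, ℂˣ)` of `A`. -/
theorem p_character_equiv {A B : Type*} [CommGroup A] [CommGroup B] [Fintype A] [Fintype B]
    [DecidableEq A] [DecidableEq B] (p : A → B → ℂ)
    (hUnit : ∀ b : B, ∑ a : A, p a b = if b = 1 then 1 else 0)
    (hCounit : ∀ a : A, ∑ b : B, p a b = if a = 1 then 1 else 0)
    (hMul : ∀ (x y : A) (b : B),
      ∑ t : B, p x (b * t⁻¹) * p y t = if x = y then p x b else 0)
    (hComul : ∀ (x : A) (b c : B),
      ∑ t : A, p (x * t⁻¹) b * p t c = if b = c then p x b else 0)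
    (hNdgA : ∀ a : A, ∃ b : B, p a b ≠ 0)
    (hNdgB : ∀ b : B, ∃ a : A, p a b ≠ 0) :
    ∃ e : B ≃* (A →* ℂˣ),
      ∀ (b : B) (a : A), ((e b a : ℂˣ) : ℂ) = (Fintype.card A : ℂ) * p a b := by
  classical
  have hFinA : Finite (A →* ℂˣ) :=
    Finite.of_equiv A (CommGroup.monoidHom_mulEquiv_of_hasEnoughRootsOfUnity A ℂ).some.toEquiv.symm
  have hFinB : Finite (B →* ℂˣ) :=
    Finite.of_equiv B (CommGroup.monoidHom_mulEquiv_of_hasEnoughRootsOfUnity B ℂ).some.toEquiv.symm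
  haveI : Fintype (A →* ℂˣ) := Fintype.ofFinite _
  haveI : Fintype (B →* ℂˣ) := Fintype.ofFinite _
  obtain ⟨β, hβsurj, hβval⟩ := key_surj p hCounit hComul hNdgB
  obtain ⟨γ, hγsurj, _⟩ := key_surj (fun b a => p a b) hUnit (fun x b c => hMul b c x) hNdgA
  have hcardBA : Fintype.card B ≤ Fintype.card A := by
    have := Fintype.card_le_of_surjective β hβsurj
    rwa [card_char] at this
  have hcardAB : Fintype.card A ≤ Fintype.card B := by
    have := Fintype.card_le_of_surjective γ hγsurj
    rwa [card_char] at this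
  have hcard : Fintype.card A = Fintype.card B := le_antisymm hcardAB hcardBA
  have hβbij : Function.Bijective β :=
    (Fintype.bijective_iff_surjective_and_card β).mpr ⟨hβsurj, by rw [card_char, hcard]⟩
  let E : B ≃ (A →* ℂˣ) := (Equiv.ofBijective β hβbij).symm
  have hEβ : ∀ b : B, β (E b) = b := fun b => (Equiv.ofBijective β hβbij).apply_symm_apply b
  have hform : ∀ (b : B) (a : A), ((E b a : ℂˣ) : ℂ) = (Fintype.card A : ℂ) * p a b := by
    intro b a
    have h1 : ∑ χ : A →* ℂˣ, (if b = β χ then 1 else 0) * ((χ a : ℂˣ) : ℂ)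
        = ((E b a : ℂˣ) : ℂ) := by
      rw [Finset.sum_eq_single (E b)]
      · rw [if_pos (hEβ b).symm, one_mul]
      · intro χ _ hne
        have hcond : ¬ (b = β χ) := fun hEq =>
          hne (hβbij.injective (by rw [hEβ b]; exact hEq.symm))
        rw [if_neg hcond, zero_mul]
      · intro h; exact absurd (Finset.mem_univ _) h
    rw [← h1, hβval b a, card_char]
  have hmulE : ∀ b c : B, E (b * c) = E b * E c := by
    intro b c
    have base : ∀ a : A,
        ∑ t : B, ((E (b * c * t⁻¹) a : ℂˣ) : ℂ) * ((E t a : ℂˣ) : ℂ)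
          = (Fintype.card A : ℂ) * ((E (b * c) a : ℂˣ) : ℂ) := by
      intro a
      have h := hMul a a (b * c)
      rw [if_pos rfl] at h
      have hterm : ∀ t : B, ((E (b * c * t⁻¹) a : ℂˣ) : ℂ) * ((E t a : ℂˣ) : ℂ)
          = (Fintype.card A : ℂ) * (Fintype.card A : ℂ) * (p a (b * c * t⁻¹) * p a t) := by
        intro t; rw [hform (b * c * t⁻¹) a, hform t a]; ring
      simp_rw [hterm]
      rw [← Finset.mul_sum, h, hform (b * c) a]; ring
    have hsum : ∀ t : B,
        ∑ a : A, ((E (b * c * t⁻¹) a : ℂˣ) : ℂ) * ((E t a : ℂˣ) : ℂ)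
            * (((E b * E c)⁻¹ a : ℂˣ) : ℂ)
          = if E (b * c * t⁻¹) * E t * (E b * E c)⁻¹ = 1 then (Fintype.card A : ℂ) else 0 := by
      intro t
      rw [← sum_char (E (b * c * t⁻¹) * E t * (E b * E c)⁻¹)]
      refine Finset.sum_congr rfl fun a _ => ?_
      simp [Units.val_mul]
    have main : ∑ t : B,
        (if E (b * c * t⁻¹) * E t * (E b * E c)⁻¹ = 1 then (Fintype.card A : ℂ) else 0)
        = (Fintype.card A : ℂ) *
          (if E (b * c) * (E b * E c)⁻¹ = 1 then (Fintype.card A : ℂ) else 0) := by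
      calc ∑ t : B,
            (if E (b * c * t⁻¹) * E t * (E b * E c)⁻¹ = 1 then (Fintype.card A : ℂ) else 0)
          = ∑ t : B, ∑ a : A, ((E (b * c * t⁻¹) a : ℂˣ) : ℂ) * ((E t a : ℂˣ) : ℂ)
              * (((E b * E c)⁻¹ a : ℂˣ) : ℂ) :=
            Finset.sum_congr rfl fun t _ => (hsum t).symm
        _ = ∑ a : A, ∑ t : B, ((E (b * c * t⁻¹) a : ℂˣ) : ℂ) * ((E t a : ℂˣ) : ℂ)
              * (((E b * E c)⁻¹ a : ℂˣ) : ℂ) := Finset.sum_comm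
        _ = ∑ a : A, ((Fintype.card A : ℂ) * ((E (b * c) a : ℂˣ) : ℂ))
              * (((E b * E c)⁻¹ a : ℂˣ) : ℂ) := by
            refine Finset.sum_congr rfl fun a _ => ?_
            rw [← Finset.sum_mul, base a]
        _ = (Fintype.card A : ℂ)
              * ∑ a : A, (((E (b * c) * (E b * E c)⁻¹) a : ℂˣ) : ℂ) := by
            rw [Finset.mul_sum]
            refine Finset.sum_congr rfl fun a _ => ?_
            simp [Units.val_mul]
            ring
        _ = (Fintype.card A : ℂ) *
            (if E (b * c) * (E b * E c)⁻¹ = 1 then (Fintype.card A : ℂ) else 0) := by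
            rw [sum_char]
    have hc' : E (b * c * c⁻¹) * E c * (E b * E c)⁻¹ = 1 := by
      rw [mul_inv_cancel_right]
      exact mul_inv_cancel (E b * E c)
    by_contra hne
    have hν : E (b * c) * (E b * E c)⁻¹ ≠ 1 := fun h => hne (mul_inv_eq_one.mp h)
    rw [if_neg hν, mul_zero] at main
    have hcount : ∑ t : B,
        (if E (b * c * t⁻¹) * E t * (E b * E c)⁻¹ = 1 then (Fintype.card A : ℂ) else 0)
        = (Fintype.card A : ℂ) *
          ((Finset.univ.filter
            (fun t : B => E (b * c * t⁻¹) * E t * (E b * E c)⁻¹ = 1)).card : ℂ) := by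
      rw [Finset.sum_ite, Finset.sum_const, Finset.sum_const_zero, add_zero, nsmul_eq_mul]
      ring
    rw [hcount] at main
    rcases mul_eq_zero.mp main with h | h
    · exact (Nat.cast_ne_zero.mpr (Fintype.card_ne_zero (α := A))) h
    · rw [Nat.cast_eq_zero, Finset.card_eq_zero] at h
      have hmem : c ∈ Finset.univ.filter
          (fun t : B => E (b * c * t⁻¹) * E t * (E b * E c)⁻¹ = 1) :=
        Finset.mem_filter.mpr ⟨Finset.mem_univ c, hc'⟩
      rw [h] at hmem
      exact absurd hmem (Finset.notMem_empty c)
  exact ⟨MulEquiv.mk' E hmulE, fun b a => hform b a⟩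
end

section
/- Let G and H be groups, ω a normalized 3-cocycle on G with comultiplicative phase γ, and u : H → G a group homomorphism. Define η : H × H × H → ℂ by η(m,n,k) = ω(u(m),u(n),u(k)) (a normalized 3-cocycle on H), and let γ′ be the comultiplicative phase of η. Fix x ∈ G and w ∈ H and define κ(m,n) = γ_x(u(m),u(n)) / γ′_w(m,n) and ξ(m,n,k) = η(w⁻¹mw, w⁻¹nw, w⁻¹kw) / ω(x⁻¹u(m)x, x⁻¹u(n)x, x⁻¹u(k)x). Then for all m, n, k ∈ H: κ(m,n)·κ(mn,k) = κ(n,k)·κ(m,nk)·ξ(m,n,k). -/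
lemma gammaPh_ne_zero {G : Type*} [Group G] (ω : G → G → G → ℂ)
    (hne : ∀ a b c : G, ω a b c ≠ 0) (x g h : G) : gammaPh ω x g h ≠ 0 := by
  unfold gammaPh
  exact div_ne_zero (mul_ne_zero (hne _ _ _) (hne _ _ _)) (hne _ _ _)

/-- The key hexagon-type identity for the comultiplicative phase of a 3-cocycle. -/
lemma gamma_key {G : Type*} [Group G] (ω : G → G → G → ℂ)
    (hne : ∀ a b c : G, ω a b c ≠ 0)
    (hcoc : ∀ a b c d : G,
      ω a b c * ω a (b * c) d * ω b c d = ω (a * b) c d * ω a b (c * d))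
    (x g h k : G) :
    gammaPh ω x g h * gammaPh ω x (g * h) k * ω (x⁻¹ * g * x) (x⁻¹ * h * x) (x⁻¹ * k * x)
      = gammaPh ω x h k * gammaPh ω x g (h * k) * ω g h k := by
  have p1 := hcoc g h k x
  have p2 := hcoc g h x (x⁻¹ * k * x)
  have p3 := hcoc g x (x⁻¹ * h * x) (x⁻¹ * k * x)
  have p4 := hcoc x (x⁻¹ * g * x) (x⁻¹ * h * x) (x⁻¹ * k * x)
  have e1 : x * (x⁻¹ * k * x) = k * x := by group
  have e2 : x * (x⁻¹ * h * x) = h * x := by group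
  have e3 : (x⁻¹ * h * x) * (x⁻¹ * k * x) = x⁻¹ * (h * k) * x := by group
  have e4 : (x⁻¹ * g * x) * (x⁻¹ * h * x) = x⁻¹ * (g * h) * x := by group
  have e5 : x * (x⁻¹ * g * x) = g * x := by group
  rw [e1] at p2
  rw [e2, e3] at p3
  rw [e4, e5, e3] at p4
  have hDL : ω g x (x⁻¹ * h * x) * ω (g * h) x (x⁻¹ * k * x) ≠ 0 :=
    mul_ne_zero (hne _ _ _) (hne _ _ _)
  have hDR : ω h x (x⁻¹ * k * x) * ω g x (x⁻¹ * (h * k) * x) ≠ 0 :=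
    mul_ne_zero (hne _ _ _) (hne _ _ _)
  rw [show gammaPh ω x g h * gammaPh ω x (g * h) k
        * ω (x⁻¹ * g * x) (x⁻¹ * h * x) (x⁻¹ * k * x)
      = (ω g h x * ω x (x⁻¹ * g * x) (x⁻¹ * h * x) * ω (g * h) k x
          * ω x (x⁻¹ * (g * h) * x) (x⁻¹ * k * x)
          * ω (x⁻¹ * g * x) (x⁻¹ * h * x) (x⁻¹ * k * x))
        / (ω g x (x⁻¹ * h * x) * ω (g * h) x (x⁻¹ * k * x)) from by
      simp only [gammaPh]; ring,
    show gammaPh ω x h k * gammaPh ω x g (h * k) * ω g h k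
      = (ω h k x * ω x (x⁻¹ * h * x) (x⁻¹ * k * x) * ω g (h * k) x
          * ω x (x⁻¹ * g * x) (x⁻¹ * (h * k) * x) * ω g h k)
        / (ω h x (x⁻¹ * k * x) * ω g x (x⁻¹ * (h * k) * x)) from by
      simp only [gammaPh]; ring,
    div_eq_div_iff hDL hDR]
  have hC : (ω (g * h) k x * ω g h (k * x))
      * (ω (g * h) x (x⁻¹ * k * x) * ω g h (k * x))
      * (ω (g * x) (x⁻¹ * h * x) (x⁻¹ * k * x) * ω g x (x⁻¹ * (h * k) * x))
      * (ω (g * x) (x⁻¹ * h * x) (x⁻¹ * k * x) * ω x (x⁻¹ * g * x) (x⁻¹ * (h * k) * x))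
      ≠ 0 := by
    apply mul_ne_zero
    apply mul_ne_zero
    apply mul_ne_zero
    all_goals exact mul_ne_zero (hne _ _ _) (hne _ _ _)
  apply mul_right_cancel₀ hC
  calc
    ω g h x * ω x (x⁻¹ * g * x) (x⁻¹ * h * x) * ω (g * h) k x
          * ω x (x⁻¹ * (g * h) * x) (x⁻¹ * k * x)
          * ω (x⁻¹ * g * x) (x⁻¹ * h * x) (x⁻¹ * k * x)
          * (ω h x (x⁻¹ * k * x) * ω g x (x⁻¹ * (h * k) * x))
        * ((ω (g * h) k x * ω g h (k * x))
          * (ω (g * h) x (x⁻¹ * k * x) * ω g h (k * x))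
          * (ω (g * x) (x⁻¹ * h * x) (x⁻¹ * k * x) * ω g x (x⁻¹ * (h * k) * x))
          * (ω (g * x) (x⁻¹ * h * x) (x⁻¹ * k * x) * ω x (x⁻¹ * g * x) (x⁻¹ * (h * k) * x)))
      = ω g h x * ω x (x⁻¹ * g * x) (x⁻¹ * h * x) * ω (g * h) k x
          * ω x (x⁻¹ * (g * h) * x) (x⁻¹ * k * x)
          * ω (x⁻¹ * g * x) (x⁻¹ * h * x) (x⁻¹ * k * x)
          * (ω h x (x⁻¹ * k * x) * ω g x (x⁻¹ * (h * k) * x))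
        * ((ω g h k * ω g (h * k) x * ω h k x)
          * (ω (g * h) x (x⁻¹ * k * x) * ω g h (k * x))
          * (ω g x (x⁻¹ * h * x) * ω g (h * x) (x⁻¹ * k * x)
              * ω x (x⁻¹ * h * x) (x⁻¹ * k * x))
          * (ω (g * x) (x⁻¹ * h * x) (x⁻¹ * k * x) * ω x (x⁻¹ * g * x) (x⁻¹ * (h * k) * x))) := by
        rw [p1, p3]
    _ = ω h k x * ω x (x⁻¹ * h * x) (x⁻¹ * k * x) * ω g (h * k) x
          * ω x (x⁻¹ * g * x) (x⁻¹ * (h * k) * x) * ω g h k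
          * (ω g x (x⁻¹ * h * x) * ω (g * h) x (x⁻¹ * k * x))
        * ((ω (g * h) k x * ω g h (k * x))
          * (ω g h x * ω g (h * x) (x⁻¹ * k * x) * ω h x (x⁻¹ * k * x))
          * (ω (g * x) (x⁻¹ * h * x) (x⁻¹ * k * x) * ω g x (x⁻¹ * (h * k) * x))
          * (ω x (x⁻¹ * g * x) (x⁻¹ * h * x) * ω x (x⁻¹ * (g * h) * x) (x⁻¹ * k * x)
              * ω (x⁻¹ * g * x) (x⁻¹ * h * x) (x⁻¹ * k * x))) := by
        ring
    _ = ω h k x * ω x (x⁻¹ * h * x) (x⁻¹ * k * x) * ω g (h * k) x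
          * ω x (x⁻¹ * g * x) (x⁻¹ * (h * k) * x) * ω g h k
          * (ω g x (x⁻¹ * h * x) * ω (g * h) x (x⁻¹ * k * x))
        * ((ω (g * h) k x * ω g h (k * x))
          * (ω (g * h) x (x⁻¹ * k * x) * ω g h (k * x))
          * (ω (g * x) (x⁻¹ * h * x) (x⁻¹ * k * x) * ω g x (x⁻¹ * (h * k) * x))
          * (ω (g * x) (x⁻¹ * h * x) (x⁻¹ * k * x)
              * ω x (x⁻¹ * g * x) (x⁻¹ * (h * k) * x))) := by
        rw [p2, p4]

/-- Let `ω` be a normalized 3-cocycle on `G`, `u : H → G` a group homomorphism, and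
`η(m,n,k) = ω(u(m),u(n),u(k))` the pulled-back 3-cocycle on `H` with comultiplicative
phase `γ′`.  For fixed `x ∈ G`, `w ∈ H`, set `κ(m,n) = γ_x(u(m),u(n))/γ′_w(m,n)` and
`ξ(m,n,k) = η(w⁻¹mw, w⁻¹nw, w⁻¹kw) / ω(x⁻¹u(m)x, x⁻¹u(n)x, x⁻¹u(k)x)`.  Then
`κ(m,n)·κ(mn,k) = κ(n,k)·κ(m,nk)·ξ(m,n,k)` for all `m, n, k ∈ H`. -/
theorem kappa_two_cocycle_up_to_xi {G H : Type*} [Group G] [Group H]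
    (ω : G → G → G → ℂ)
    (habs : ∀ a b c : G, ‖ω a b c‖ = 1)
    (hcoc : ∀ a b c d : G,
      ω a b c * ω a (b * c) d * ω b c d = ω (a * b) c d * ω a b (c * d))
    (hnorm : ∀ g h : G, ω g 1 h = 1)
    (u : H →* G)
    (η : H → H → H → ℂ)
    (hη : ∀ m n k : H, η m n k = ω (u m) (u n) (u k))
    (x : G) (w : H)
    (κ : H → H → ℂ)
    (hκ : ∀ m n : H, κ m n = gammaPh ω x (u m) (u n) / gammaPh η w m n)
    (ξ : H → H → H → ℂ)
    (hξ : ∀ m n k : H,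
      ξ m n k = η (w⁻¹ * m * w) (w⁻¹ * n * w) (w⁻¹ * k * w)
        / ω (x⁻¹ * u m * x) (x⁻¹ * u n * x) (x⁻¹ * u k * x)) :
    ∀ m n k : H, κ m n * κ (m * n) k = κ n k * κ m (n * k) * ξ m n k := by
  have hne : ∀ a b c : G, ω a b c ≠ 0 := by
    intro a b c h0
    have := habs a b c
    rw [h0] at this
    simp at this
  have hneη : ∀ a b c : H, η a b c ≠ 0 := by
    intro a b c
    rw [hη]
    exact hne _ _ _
  have hcocη : ∀ a b c d : H,
      η a b c * η a (b * c) d * η b c d = η (a * b) c d * η a b (c * d) := by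
    intro a b c d
    simp only [hη, map_mul]
    exact hcoc (u a) (u b) (u c) (u d)
  intro m n k
  have k1 := gamma_key ω hne hcoc x (u m) (u n) (u k)
  have k2 := gamma_key η hneη hcocη w m n k
  rw [hη m n k] at k2
  have gc1 : gammaPh η w m n ≠ 0 := gammaPh_ne_zero η hneη w m n
  have gc2 : gammaPh η w (m * n) k ≠ 0 := gammaPh_ne_zero η hneη w (m * n) k
  have gd1 : gammaPh η w n k ≠ 0 := gammaPh_ne_zero η hneη w n k
  have gd2 : gammaPh η w m (n * k) ≠ 0 := gammaPh_ne_zero η hneη w m (n * k)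
  have hW : ω (x⁻¹ * u m * x) (x⁻¹ * u n * x) (x⁻¹ * u k * x) ≠ 0 := hne _ _ _
  rw [hκ m n, hκ (m * n) k, hκ n k, hκ m (n * k), hξ m n k, map_mul u m n, map_mul u n k]
  rw [div_mul_div_comm, div_mul_div_comm, div_mul_div_comm,
    div_eq_div_iff (mul_ne_zero gc1 gc2)
      (mul_ne_zero (mul_ne_zero gd1 gd2) hW)]
  linear_combination
    (gammaPh η w n k * gammaPh η w m (n * k)) * k1
    - (gammaPh ω x (u n) (u k) * gammaPh ω x (u m) (u n * u k)) * k2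
end
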